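/- arXiv:1110.4896 — 4 statements merged into one kernel-verified Lean document; each statement's English description precedes it below -/
import Mathlib

section
/- Let D be a digraph with maximum out-degree Δ_o, and suppose there is a partial proper coloring of D using at most Δ_o + 1 − r colors such that for every vertex v there are at least r colors each of which appears on at least two vertices of the out-neighborhood N⁺(v). Then D is (Δ_o + 1 − r)-colorable. -/
/-- A set `A` of vertices of a digraph (given by its arc relation `Adj`) is *acyclic*
if the subdigraph induced on `A` contains no directed cycle; equivalently, no vertex of `A`
lies on a closed directed walk all of whose vertices are in `A`. -/
def AcyclicSet {V : Type*} (Adj : V → V → Prop) (A : Set V) : Prop :=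
  ∀ v ∈ A, ¬ Relation.TransGen (fun x y => x ∈ A ∧ y ∈ A ∧ Adj x y) v v

/-- A digraph is `k`-colorable if its vertex set can be partitioned into `k` acyclic sets. -/
def DiColorable {V : Type*} (Adj : V → V → Prop) (k : ℕ) : Prop :=
  ∃ f : V → Fin k, ∀ i : Fin k, AcyclicSet Adj {v | f v = i}

/-- The chromatic number of a digraph: the least `k` admitting a partition of the
vertex set into `k` acyclic sets. -/
noncomputable def dichromNum {V : Type*} (Adj : V → V → Prop) : ℕ :=
  sInf {k | DiColorable Adj k}

/-- A digraph is digon-free if it has no directed cycle of length two. -/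
def DigonFree {V : Type*} (Adj : V → V → Prop) : Prop :=
  ∀ u v, Adj u v → ¬ Adj v u

/-- The out-degree of a vertex. -/
noncomputable def outDeg {V : Type*} (Adj : V → V → Prop) (v : V) : ℕ :=
  Nat.card {u // Adj v u}

/-- The in-degree of a vertex. -/
noncomputable def inDeg {V : Type*} (Adj : V → V → Prop) (v : V) : ℕ :=
  Nat.card {u // Adj u v}

/-- `Δ̃(D)`: the maximum geometric mean of the out-degree and in-degree of a vertex. -/
noncomputable def tildeDelta {V : Type*} [Fintype V] (Adj : V → V → Prop) : ℝ :=
  ⨆ v : V, Real.sqrt ((outDeg Adj v : ℝ) * (inDeg Adj v : ℝ))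

/-- The underlying undirected graph of a digraph. -/
def underGraph {V : Type*} (Adj : V → V → Prop) : SimpleGraph V where
  Adj a b := a ≠ b ∧ (Adj a b ∨ Adj b a)
  symm := ⟨fun _ _ h => ⟨h.1.symm, h.2.symm⟩⟩
  loopless := ⟨fun _ h => h.1 rfl⟩

lemma acyclic_insert {V : Type*} (Adj : V → V → Prop) {A : Set V} (hA : AcyclicSet Adj A)
    (v₀ : V) (hout : ∀ u ∈ insert v₀ A, ¬ Adj v₀ u) :
    AcyclicSet Adj (insert v₀ A) := by
  set A' : Set V := insert v₀ A with hA'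
  have hsrc : ∀ a b : V, (a ∈ A' ∧ b ∈ A' ∧ Adj a b) → a ≠ v₀ := by
    rintro a b ⟨ha, hb, hab⟩ rfl
    exact hout b hb hab
  have key : ∀ a b : V, Relation.TransGen (fun x y => x ∈ A' ∧ y ∈ A' ∧ Adj x y) a b →
      a ≠ v₀ ∧ Relation.TransGen (fun x y => x ∈ A ∧ y ∈ A ∧ Adj x y) a b ∨ b = v₀ := by
    intro a b h
    induction h with
    | single h =>
      rename_i b'
      by_cases hb : b' = v₀
      · exact Or.inr hb
      · left
        have ha := hsrc _ _ h
        exact ⟨ha, .single ⟨(Set.mem_insert_iff.mp h.1).resolve_left ha,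
          (Set.mem_insert_iff.mp h.2.1).resolve_left hb, h.2.2⟩⟩
    | tail hstep hlast ih =>
      rename_i b c
      by_cases hc : c = v₀
      · exact Or.inr hc
      · left
        have hbne : b ≠ v₀ := hsrc _ _ hlast
        rcases ih with ⟨ha, htg⟩ | hb
        · exact ⟨ha, htg.tail ⟨(Set.mem_insert_iff.mp hlast.1).resolve_left hbne,
            (Set.mem_insert_iff.mp hlast.2.1).resolve_left hc, hlast.2.2⟩⟩
        · exact absurd hb hbne
  intro v hv hcyc
  by_cases hv0 : v = v₀
  · subst hv0
    rcases (Relation.TransGen.head'_iff.mp hcyc) with ⟨c, h, _⟩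
    exact hout _ h.2.1 h.2.2
  · rcases key v v hcyc with ⟨hne, hcyc'⟩ | h
    · exact hA v ((Set.mem_insert_iff.mp hv).resolve_left hv0) hcyc'
    · exact hv0 h

lemma extend_coloring {V : Type} [Fintype V] (Adj : V → V → Prop)
    (hloopless : ∀ v, ¬ Adj v v)
    (Δo : ℕ) (hΔo : Δo = ⨆ v, outDeg Adj v) (r : ℕ) :
    ∀ (n : ℕ) (f : V → Option (Fin (Δo + 1 - r))),
    (∀ i : Fin (Δo + 1 - r), AcyclicSet Adj {v | f v = some i}) →
    (∀ v : V, r ≤ Nat.card {i : Fin (Δo + 1 - r) //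
      ∃ u w : V, u ≠ w ∧ Adj v u ∧ Adj v w ∧ f u = some i ∧ f w = some i}) →
    Nat.card {v // f v = none} ≤ n →
    DiColorable Adj (Δo + 1 - r) := by
  classical
  intro n
  induction n with
  | zero =>
    intro f hproper hrep hcard
    have hall : ∀ v, (f v).isSome := by
      intro v
      by_contra h
      have hnone : f v = none := Option.not_isSome_iff_eq_none.mp h
      have : 0 < Nat.card {v // f v = none} := Nat.card_pos_iff.mpr ⟨⟨v, hnone⟩, inferInstance⟩
      omega
    refine ⟨fun v => (f v).get (hall v), fun i => ?_⟩
    have hset : {v | (f v).get (hall v) = i} = {v | f v = some i} := by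
      ext v
      simp only [Set.mem_setOf_eq]
      constructor
      · intro h; rw [← h, Option.some_get]
      · intro h; simp [Option.get_of_mem _ h]
    rw [hset]
    exact hproper i
  | succ n ih =>
    intro f hproper hrep hcard
    by_cases hle : Nat.card {v // f v = none} ≤ n
    · exact ih f hproper hrep hle
    have hpos : 0 < Nat.card {v // f v = none} := by omega
    obtain ⟨⟨v₀, hv₀⟩, -⟩ := Nat.card_pos_iff.mp hpos
    -- counting: find a color i₀ not appearing on any out-neighbor of v₀
    have hdeg : outDeg Adj v₀ ≤ Δo := by
      rw [hΔo]
      exact le_ciSup (Set.Finite.bddAbove (Set.finite_range _)) v₀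
    set N : Finset V := Finset.univ.filter (fun u => Adj v₀ u) with hN
    have hNcard : N.card = outDeg Adj v₀ := by
      rw [outDeg, Nat.card_eq_fintype_card, Fintype.card_subtype]
    set S : Finset (Fin (Δo + 1 - r)) :=
      Finset.univ.filter (fun i : Fin (Δo + 1 - r) => ∃ u, Adj v₀ u ∧ f u = some i) with hS
    set R : Finset (Fin (Δo + 1 - r)) :=
      Finset.univ.filter (fun i : Fin (Δo + 1 - r) => ∃ u w : V, u ≠ w ∧ Adj v₀ u ∧ Adj v₀ w ∧
        f u = some i ∧ f w = some i) with hR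
    have hRcard : r ≤ R.card := by
      have := hrep v₀
      rwa [Nat.card_eq_fintype_card, Fintype.card_subtype] at this
    have hRS : R ⊆ S := by
      intro i hi
      simp only [hR, hS, Finset.mem_filter, Finset.mem_univ, true_and] at hi ⊢
      obtain ⟨u, w, -, hu, -, hfu, -⟩ := hi
      exact ⟨u, hu, hfu⟩
    have hkpos : 0 < Δo + 1 - r := by
      rcases Nat.eq_zero_or_pos (Δo + 1 - r) with h0 | h; swap
      · exact h
      exfalso
      have : R.card = 0 := by
        have := Finset.card_le_card (Finset.subset_univ R)
        simpa [h0] using this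
      omega
    set T : Finset V := N.filter (fun u => (f u).isSome) with hT
    set g : V → Fin (Δo + 1 - r) := fun u => (f u).getD ⟨0, hkpos⟩ with hg
    have hgf : ∀ u : V, (f u).isSome → f u = some (g u) := by
      intro u hu
      rcases h : f u with _ | i
      · rw [h] at hu; simp at hu
      · simp [hg, h]
    have hTfib : T.card = ∑ i ∈ S, (T.filter (fun u => g u = i)).card := by
      apply Finset.card_eq_sum_card_fiberwise
      intro u hu
      simp only [hT, hN, Finset.mem_filter, Finset.mem_univ, true_and] at hu
      simp only [hS, Finset.mem_filter, Finset.mem_univ, true_and]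
      have hu' : u ∈ T := hu
      obtain ⟨hN', hs⟩ := Finset.mem_filter.mp hu'
      exact (Finset.mem_filter.mpr ⟨Finset.mem_univ _, u, (Finset.mem_filter.mp hN').2, hgf u hs⟩ : g u ∈ S)
    have hsum : S.card + R.card ≤ T.card := by
      rw [hTfib]
      have h1 : S.card + R.card = ∑ i ∈ S, (1 + if i ∈ R then 1 else 0) := by
        rw [Finset.sum_add_distrib]
        simp only [Finset.sum_const, smul_eq_mul, mul_one]
        congr 1
        rw [Finset.sum_ite_mem, Finset.inter_eq_right.mpr hRS]
        simp
      rw [h1]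
      apply Finset.sum_le_sum
      intro i hi
      by_cases hiR : i ∈ R
      · simp only [hiR, if_true]
        simp only [hR, Finset.mem_filter, Finset.mem_univ, true_and] at hiR
        obtain ⟨u, w, huw, hu, hw, hfu, hfw⟩ := hiR
        have hmem : ∀ x, Adj v₀ x → f x = some i → x ∈ T.filter (fun u => g u = i) := by
          intro x hx hfx
          simp only [hT, hN, Finset.mem_filter, Finset.mem_univ, true_and]
          refine ⟨⟨hx, by simp [hfx]⟩, ?_⟩
          have := hgf x (by simp [hfx])
          rw [hfx] at this
          exact (Option.some_injective _ this).symm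
        have : 1 < (T.filter (fun u => g u = i)).card :=
          Finset.one_lt_card.mpr ⟨u, hmem u hu hfu, w, hmem w hw hfw, huw⟩
        omega
      · simp only [hiR, if_false]
        simp only [hS, Finset.mem_filter, Finset.mem_univ, true_and] at hi
        obtain ⟨u, hu, hfu⟩ := hi
        have : u ∈ T.filter (fun x => g x = i) := by
          simp only [hT, hN, Finset.mem_filter, Finset.mem_univ, true_and]
          refine ⟨⟨hu, by simp [hfu]⟩, ?_⟩
          have := hgf u (by simp [hfu])
          rw [hfu] at this
          exact (Option.some_injective _ this).symm
        have := Finset.card_pos.mpr ⟨u, this⟩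
        omega
    have hTN : T.card ≤ N.card := Finset.card_le_card (Finset.filter_subset _ _)
    have hNΔ : N.card ≤ Δo := hNcard ▸ hdeg
    have hScard : S.card < Δo + 1 - r := by omega
    have : ∃ i₀ : Fin (Δo + 1 - r), i₀ ∉ S := by
      by_contra h
      push_neg at h
      have : S = Finset.univ := Finset.eq_univ_of_forall h
      rw [this, Finset.card_univ, Fintype.card_fin] at hScard
      omega
    obtain ⟨i₀, hi₀⟩ := this
    have hi₀' : ∀ u, Adj v₀ u → f u ≠ some i₀ := by
      intro u hu hfu
      exact hi₀ (by simp only [hS, Finset.mem_filter, Finset.mem_univ, true_and]; exact ⟨u, hu, hfu⟩)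
    set f' : V → Option (Fin (Δo + 1 - r)) := Function.update f v₀ (some i₀) with hf'
    have hf'v : ∀ v, v ≠ v₀ → f' v = f v := fun v hv => Function.update_of_ne hv _ _
    have hf'v₀ : f' v₀ = some i₀ := Function.update_self _ _ _
    have hold : ∀ v i, f v = some i → f' v = some i := by
      intro v i h
      rw [hf'v v (fun hvv => by rw [hvv, hv₀] at h; exact nomatch h)]
      exact h
    -- properness of f'
    have hproper' : ∀ i : Fin (Δo + 1 - r), AcyclicSet Adj {v | f' v = some i} := by
      intro i
      by_cases hii : i = i₀
      · have hset : {v | f' v = some i} = insert v₀ {v | f v = some i₀} := by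
          ext v
          simp only [Set.mem_setOf_eq, Set.mem_insert_iff, hii]
          by_cases hvv : v = v₀
          · subst hvv; simp [hf'v₀]
          · rw [hf'v v hvv]; simp [hvv]
        rw [hset]
        apply acyclic_insert Adj (hproper i₀)
        intro u hu hadj
        rcases Set.mem_insert_iff.mp hu with h | h
        · exact hloopless v₀ (h ▸ hadj)
        · exact hi₀' u hadj h
      · have hset : {v | f' v = some i} = {v | f v = some i} := by
          ext v
          simp only [Set.mem_setOf_eq]
          by_cases hvv : v = v₀
          · subst hvv
            rw [hf'v₀, hv₀]
            constructor
            · intro h; exact absurd (Option.some_injective _ h).symm hii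
            · intro h; exact nomatch h
          · rw [hf'v v hvv]
        rw [hset]
        exact hproper i
    -- repetition condition for f'
    have hrep' : ∀ v : V, r ≤ Nat.card {i : Fin (Δo + 1 - r) //
        ∃ u w : V, u ≠ w ∧ Adj v u ∧ Adj v w ∧ f' u = some i ∧ f' w = some i} := by
      intro v
      refine le_trans (hrep v) (Nat.card_le_card_of_injective
        (fun x => ⟨x.1, ?_⟩) ?_)
      · obtain ⟨u, w, huw, hu, hw, hfu, hfw⟩ := x.2
        exact ⟨u, w, huw, hu, hw, hold u _ hfu, hold w _ hfw⟩
      · intro a b hab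
        apply Subtype.ext
        have := congrArg Subtype.val hab
        simpa using this
    -- uncolored count decreased
    have hcount : Nat.card {v // f' v = none} ≤ n := by
      have hlt : Nat.card {v // f' v = none} < Nat.card {v // f v = none} := by
        rw [Nat.card_eq_fintype_card, Nat.card_eq_fintype_card,
          Fintype.card_subtype, Fintype.card_subtype]
        apply Finset.card_lt_card
        constructor
        · intro v hv
          simp only [Finset.mem_filter, Finset.mem_univ, true_and] at hv ⊢
          have hvv : v ≠ v₀ := by
            intro h; rw [h, hf'v₀] at hv; exact nomatch hv
          rwa [hf'v v hvv] at hv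
        · intro hsub
          have hmem : v₀ ∈ Finset.univ.filter (fun v => f' v = none) :=
            hsub (by simp only [Finset.mem_filter, Finset.mem_univ, true_and]; exact hv₀)
          simp only [Finset.mem_filter, Finset.mem_univ, true_and, hf'v₀] at hmem
          exact nomatch hmem
      omega
    exact ih f' hproper' hrep' hcount


/-- **Lemma 1.** Let `D` be a digraph with maximum out-degree `Δ_o`, and suppose we have a
partial proper coloring of `D` with at most `Δ_o + 1 - r` colors (each color class being
acyclic) such that for every vertex `v` at least `r` colors appear on at least two vertices
of `N⁺(v)`.  Then `D` is `(Δ_o + 1 - r)`-colorable. -/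
theorem stmt_3 {V : Type} [Fintype V] (Adj : V → V → Prop)
    (hloopless : ∀ v, ¬ Adj v v)
    (Δo : ℕ) (hΔo : Δo = ⨆ v, outDeg Adj v) (r : ℕ)
    -- a partial proper coloring with (at most) `Δ_o + 1 - r` colors
    (f : V → Option (Fin (Δo + 1 - r)))
    (hproper : ∀ i : Fin (Δo + 1 - r), AcyclicSet Adj {v | f v = some i})
    -- for every vertex `v`, at least `r` colors appear on at least two out-neighbors of `v`
    (hrep : ∀ v : V, r ≤ Nat.card {i : Fin (Δo + 1 - r) //
      ∃ u w : V, u ≠ w ∧ Adj v u ∧ Adj v w ∧ f u = some i ∧ f w = some i}) :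
    DiColorable Adj (Δo + 1 - r) := by
  exact extend_coloring Adj hloopless Δo hΔo r (Nat.card {v // f v = none}) f hproper hrep le_rfl
end

section
/- Let D be a digon-free digraph with Δ̃ = Δ̃(D), let c₁ = 1 − e^{−11}/3 and c₂ = 1 + e^{−11}/3, and suppose that every vertex v of D satisfies c₁Δ̃ < d⁺(v) < c₂Δ̃ and c₁Δ̃ < d⁻(v) < c₂Δ̃. Set C = ⌊Δ̃/2⌋ and color each vertex of D independently and uniformly at random with a color from {1, …, C}; then uncolor every vertex that lies on a monochromatic directed path with at least two arcs. For a vertex v, let X_v be the number of colors i such that at least two out-neighbors of v were assigned color i and all out-neighbors of v assigned color i retain their color after the uncoloring. Then, provided Δ̃ is sufficiently large, E[X_v] ≥ Δ̃/e^{11} − 1. -/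
/-- Given a random color assignment `σ : V → Fin C`, a vertex `u` gets *uncolored* if it lies
on a monochromatic directed path with at least two arcs, i.e. there are distinct vertices
`x → y → z` all of the same color with `u ∈ {x, y, z}`. -/
def Uncolored {V : Type*} (Adj : V → V → Prop) {C : ℕ} (σ : V → Fin C) (u : V) : Prop :=
  ∃ x y z : V, x ≠ y ∧ y ≠ z ∧ x ≠ z ∧ Adj x y ∧ Adj y z ∧
    σ x = σ y ∧ σ y = σ z ∧ (u = x ∨ u = y ∨ u = z)

/-- `X_v`: the number of colors `i` that are assigned to at least two out-neighbors of `v`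
and such that all out-neighbors of `v` assigned color `i` retain their color after the
uncoloring step. -/
noncomputable def Xv {V : Type*} (Adj : V → V → Prop) {C : ℕ} (σ : V → Fin C) (v : V) : ℕ :=
  Nat.card {i : Fin C //
    2 ≤ Nat.card {u : V // Adj v u ∧ σ u = i} ∧
    ∀ u : V, Adj v u → σ u = i → ¬ Uncolored Adj σ u}

/-- The expectation of `X_v` when each vertex independently receives a uniformly random
color from `Fin C` (average over all `C ^ |V|` assignments). -/
noncomputable def expXv {V : Type*} [Fintype V] [DecidableEq V] (Adj : V → V → Prop)
    (C : ℕ) (v : V) : ℝ :=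
  (∑ σ : V → Fin C, (Xv Adj σ v : ℝ)) / (C : ℝ) ^ (Fintype.card V)

open Finset

section AuxStmt4

variable {V : Type} [Fintype V] [DecidableEq V]

/-- The "good pair" event. -/
def FFst4 (Adj : V → V → Prop) {C : ℕ} (v u w : V) (i : Fin C) (σ : V → Fin C) : Prop :=
  Adj v u ∧ Adj v w ∧ u ≠ w ∧ σ u = i ∧ σ w = i ∧
    ∀ x, x ≠ u → x ≠ w → (Adj v x ∨ Adj u x ∨ Adj x u ∨ Adj w x ∨ Adj x w) → σ x ≠ i

lemma FFst4_two_le {Adj : V → V → Prop} {C : ℕ} {v u w : V} {i : Fin C} {σ : V → Fin C}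
    (h : FFst4 Adj v u w i σ) : 2 ≤ Nat.card {u' : V // Adj v u' ∧ σ u' = i} := by
  classical
  obtain ⟨h1, h2, h3, h4, h5, h6⟩ := h
  have : Nontrivial {u' : V // Adj v u' ∧ σ u' = i} :=
    ⟨⟨u, h1, h4⟩, ⟨w, h2, h5⟩, by simp only [ne_eq, Subtype.mk.injEq]; exact h3⟩
  rw [Nat.card_eq_fintype_card]
  exact Fintype.one_lt_card_iff_nontrivial.2 this

lemma FFst4_retain {Adj : V → V → Prop} {C : ℕ} {v u w : V} {i : Fin C} {σ : V → Fin C}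
    (h : FFst4 Adj v u w i σ) :
    ∀ u', Adj v u' → σ u' = i → ¬ Uncolored Adj σ u' := by
  obtain ⟨h1, h2, h3, h4, h5, h6⟩ := h
  have key : ∀ a b : V, σ b = i → a ≠ b → (a = u ∨ a = w) → (Adj a b ∨ Adj b a) →
      b = u ∨ b = w := by
    intro a b hb hab ha hadj
    by_contra hc
    push_neg at hc
    refine h6 b hc.1 hc.2 ?_ hb
    rcases ha with rfl | rfl <;> rcases hadj with h' | h' <;> tauto
  rintro u' hvu' hu' ⟨x, y, z, hxy, hyz, hxz, axy, ayz, cxy, cyz, hmem⟩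
  have hu'uw : u' = u ∨ u' = w := by
    by_contra hc
    push_neg at hc
    exact h6 u' hc.1 hc.2 (Or.inl hvu') hu'
  have hx : σ x = i := by
    rcases hmem with rfl | h' | h'
    · exact hu'
    · rw [h'] at hu'; exact cxy.trans hu'
    · rw [h'] at hu'; exact cxy.trans (cyz.trans hu')
  have hy : σ y = i := cxy.symm.trans hx
  have hz : σ z = i := cyz.symm.trans hy
  have hyuw : y = u ∨ y = w := by
    rcases hmem with rfl | rfl | rfl
    · exact key u' y hy hxy hu'uw (Or.inl axy)
    · exact hu'uw
    · exact key u' y hy (Ne.symm hyz) hu'uw (Or.inr ayz)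
  have hxuw : x = u ∨ x = w := key y x hx (Ne.symm hxy) hyuw (Or.inr axy)
  have hzuw : z = u ∨ z = w := key y z hz hyz hyuw (Or.inl ayz)
  rcases hxuw with h8 | h8 <;> rcases hyuw with h9 | h9 <;> rcases hzuw with h10 | h10
  · exact hxy (h8.trans h9.symm)
  · exact hxy (h8.trans h9.symm)
  · exact hxz (h8.trans h10.symm)
  · exact hyz (h9.trans h10.symm)
  · exact hyz (h9.trans h10.symm)
  · exact hxz (h8.trans h10.symm)
  · exact hxy (h8.trans h9.symm)
  · exact hxy (h8.trans h9.symm)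

lemma FFst4_unique {Adj : V → V → Prop} {C : ℕ} {v u w u' w' : V} {i : Fin C} {σ : V → Fin C}
    (h : FFst4 Adj v u w i σ) (h' : FFst4 Adj v u' w' i σ) :
    (u', w') = (u, w) ∨ (u', w') = (w, u) := by
  obtain ⟨h1, h2, h3, h4, h5, h6⟩ := h
  obtain ⟨g1, g2, g3, g4, g5, g6⟩ := h'
  have hu' : u' = u ∨ u' = w := by
    by_contra hc; push_neg at hc
    exact h6 u' hc.1 hc.2 (Or.inl g1) g4
  have hw' : w' = u ∨ w' = w := by
    by_contra hc; push_neg at hc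
    exact h6 w' hc.1 hc.2 (Or.inl g2) g5
  rcases hu' with h8 | h8 <;> rcases hw' with h9 | h9
  · exact absurd (h8.trans h9.symm) g3
  · left; rw [h8, h9]
  · right; rw [h8, h9]
  · exact absurd (h8.trans h9.symm) g3

end AuxStmt4
section AuxStmt4b
open Finset
variable {V : Type} [Fintype V] [DecidableEq V]

lemma st4_count (C : ℕ) (i : Fin C) (u w : V) (huw : u ≠ w) (T : Finset V)
    (hTu : u ∉ T) (hTw : w ∉ T) :
    (univ.filter (fun σ : V → Fin C => σ u = i ∧ σ w = i ∧ ∀ x ∈ T, σ x ≠ i)).card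
      = (C - 1) ^ T.card * C ^ (Fintype.card V - 2 - T.card) := by
  classical
  set Q : V → Fin C → Prop :=
    fun x y => if x = u then y = i else if x = w then y = i else if x ∈ T then y ≠ i else True
    with hQ
  have hiff : ∀ σ : V → Fin C,
      (σ u = i ∧ σ w = i ∧ ∀ x ∈ T, σ x ≠ i) ↔ ∀ x, Q x (σ x) := by
    intro σ
    constructor
    · rintro ⟨p1, p2, p3⟩ x
      simp only [hQ]
      split_ifs with e1 e2 e3
      · rw [e1]; exact p1
      · rw [e2]; exact p2
      · exact p3 x e3
    · intro hq
      refine ⟨?_, ?_, ?_⟩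
      · have := hq u; simpa only [hQ, if_pos rfl] using this
      · have := hq w
        simp only [hQ, if_neg (Ne.symm huw), if_pos rfl] at this
        exact this
      · intro x hx
        have hxu : x ≠ u := fun h => hTu (h ▸ hx)
        have hxw : x ≠ w := fun h => hTw (h ▸ hx)
        have := hq x
        simp only [hQ, if_neg hxu, if_neg hxw, if_pos hx] at this
        exact this
  have h1 : (univ.filter (fun σ : V → Fin C => σ u = i ∧ σ w = i ∧ ∀ x ∈ T, σ x ≠ i)).card
      = Nat.card {σ : V → Fin C // ∀ x, Q x (σ x)} := by
    rw [Nat.card_eq_fintype_card]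
    rw [show (univ.filter (fun σ : V → Fin C => σ u = i ∧ σ w = i ∧ ∀ x ∈ T, σ x ≠ i)).card
        = Fintype.card {σ : V → Fin C // σ u = i ∧ σ w = i ∧ ∀ x ∈ T, σ x ≠ i} from
      (Fintype.card_subtype _).symm]
    exact Fintype.card_congr (Equiv.subtypeEquivRight hiff)
  have h2 : Nat.card {σ : V → Fin C // ∀ x, Q x (σ x)} = ∏ x : V, Nat.card {y : Fin C // Q x y} := by
    rw [Nat.card_congr (Equiv.subtypePiEquivPi), Nat.card_pi]
  have hcard : ∀ x : V, Nat.card {y : Fin C // Q x y}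
      = if x = u then 1 else if x = w then 1 else if x ∈ T then C - 1 else C := by
    intro x
    simp only [hQ]
    split_ifs with e1 e2 e3
    · rw [Nat.card_eq_fintype_card]; exact Fintype.card_subtype_eq i
    · rw [Nat.card_eq_fintype_card]; exact Fintype.card_subtype_eq i
    · rw [Nat.card_eq_fintype_card]
      have : Fintype.card {y : Fin C // ¬ (y = i)} = C - 1 := by
        rw [Fintype.card_subtype_compl, Fintype.card_subtype_eq, Fintype.card_fin]
      simpa using this
    · rw [Nat.card_eq_fintype_card]
      rw [Fintype.card_congr (Equiv.subtypeUnivEquiv (fun _ => trivial))]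
      exact Fintype.card_fin C
  rw [h1, h2, Finset.prod_congr rfl (fun x _ => hcard x)]
  -- now compute the product
  have hsub : ({u, w} : Finset V) ⊆ univ := subset_univ _
  rw [← Finset.prod_sdiff hsub]
  have hpair : ∏ x ∈ ({u, w} : Finset V),
      (if x = u then 1 else if x = w then 1 else if x ∈ T then C - 1 else C) = 1 := by
    rw [Finset.prod_pair huw]
    simp [huw, Ne.symm huw]
  rw [hpair, mul_one]
  have hcongr : ∀ x ∈ univ \ ({u, w} : Finset V),
      (if x = u then 1 else if x = w then 1 else if x ∈ T then C - 1 else C)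
        = if x ∈ T then C - 1 else C := by
    intro x hx
    simp only [mem_sdiff, mem_insert, mem_singleton] at hx
    rw [if_neg (fun h => hx.2 (Or.inl h)), if_neg (fun h => hx.2 (Or.inr h))]
  rw [Finset.prod_congr rfl hcongr]
  simp only [Finset.prod_ite, Finset.prod_const]
  have hTsub : T ⊆ univ \ ({u, w} : Finset V) := by
    intro x hx
    simp only [mem_sdiff, mem_univ, mem_insert, mem_singleton, true_and]
    rintro (rfl | rfl)
    · exact hTu hx
    · exact hTw hx
  have hfT : (univ \ ({u, w} : Finset V)).filter (fun x => x ∈ T) = T := by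
    ext x
    simp only [mem_filter, mem_sdiff, mem_univ, true_and]
    constructor
    · tauto
    · intro hx
      refine ⟨by simpa using (mem_sdiff.1 (hTsub hx)).2, hx⟩
  have hcards : ((univ \ ({u, w} : Finset V)).filter (fun x => x ∉ T)).card
      = Fintype.card V - 2 - T.card := by
    have := Finset.card_filter_add_card_filter_not
      (s := univ \ ({u, w} : Finset V)) (p := fun x => x ∈ T)
    rw [hfT] at this
    have hc2 : (univ \ ({u, w} : Finset V)).card = Fintype.card V - 2 := by
      rw [Finset.card_sdiff_of_subset hsub, Finset.card_pair huw, Finset.card_univ]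
    rw [hc2] at this
    clear_value Q
    clear hQ hiff h1 h2 hcard
    omega
  rw [hfT, hcards]
end AuxStmt4b
set_option maxHeartbeats 1600000 in
open Finset in
/-- **Lemma 2.** With `c₁ = 1 - e⁻¹¹/3`, `c₂ = 1 + e⁻¹¹/3`, suppose every vertex of the
digon-free digraph `D` satisfies `c₁Δ̃ < d⁺(v) < c₂Δ̃` and `c₁Δ̃ < d⁻(v) < c₂Δ̃`.  Color each
vertex uniformly at random with one of `C = ⌊Δ̃/2⌋` colors and uncolor every vertex on a
monochromatic directed path with at least two arcs.  Then, provided `Δ̃` is sufficiently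
large, `E[X_v] ≥ Δ̃/e¹¹ - 1` for every vertex `v`. -/
theorem stmt_4 :
    ∃ Δ₂ : ℝ, ∀ (V : Type) [Fintype V] [DecidableEq V] (Adj : V → V → Prop),
      DigonFree Adj →
      (∀ v : V,
        (1 - Real.exp (-11) / 3) * tildeDelta Adj < (outDeg Adj v : ℝ) ∧
        (outDeg Adj v : ℝ) < (1 + Real.exp (-11) / 3) * tildeDelta Adj ∧
        (1 - Real.exp (-11) / 3) * tildeDelta Adj < (inDeg Adj v : ℝ) ∧
        (inDeg Adj v : ℝ) < (1 + Real.exp (-11) / 3) * tildeDelta Adj) →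
      Δ₂ ≤ tildeDelta Adj →
      ∀ (C : ℕ), C = ⌊tildeDelta Adj / 2⌋₊ →
      ∀ v : V, tildeDelta Adj / Real.exp 11 - 1 ≤ expXv Adj C v := by
  classical
  use 1000
  intro V _ _ Adj hdf hdeg hΔle C hC v
  obtain ⟨Δ, hΔdef⟩ : ∃ x : ℝ, x = tildeDelta Adj := ⟨_, rfl⟩
  rw [← hΔdef] at hdeg hΔle hC ⊢
  have hΔ : (1000:ℝ) ≤ Δ := hΔle
  obtain ⟨c₁, hc₁def⟩ : ∃ x : ℝ, x = 1 - Real.exp (-11) / 3 := ⟨_, rfl⟩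
  obtain ⟨c₂, hc₂def⟩ : ∃ x : ℝ, x = 1 + Real.exp (-11) / 3 := ⟨_, rfl⟩
  rw [← hc₁def, ← hc₂def] at hdeg
  -- basic numeric facts
  have hE : Real.exp 11 = Real.exp 5.5 * Real.exp 5.5 := by
    rw [← Real.exp_add]; norm_num
  have hE42 : (42:ℝ) ≤ Real.exp 11 := by
    nlinarith [Real.add_one_le_exp (5.5:ℝ)]
  have hEpos : (0:ℝ) < Real.exp 11 := Real.exp_pos _
  have heps_pos : (0:ℝ) < Real.exp (-11) := Real.exp_pos _
  have heps : Real.exp (-11) ≤ 0.03 := by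
    rw [Real.exp_neg]
    have h42 : (42:ℝ)⁻¹ ≤ 0.03 := by norm_num
    exact le_trans (inv_anti₀ (by norm_num) hE42) h42
  have hc₁l : (0.99:ℝ) ≤ c₁ := by rw [hc₁def]; linarith
  have hc₁u : c₁ ≤ 1 := by rw [hc₁def]; linarith
  have hc₂l : (1:ℝ) ≤ c₂ := by rw [hc₂def]; linarith
  have hc₂u : c₂ ≤ 1.01 := by rw [hc₂def]; linarith
  -- degree of v
  obtain ⟨hdv1, hdv2, _, _⟩ := hdeg v
  -- bounds on C
  have hCle : (C:ℝ) ≤ Δ / 2 := by rw [hC]; exact Nat.floor_le (by linarith)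
  have hCgt : Δ / 2 < (C:ℝ) + 1 := by rw [hC]; exact Nat.lt_floor_add_one _
  have hC499 : (499:ℝ) ≤ (C:ℝ) := by linarith
  have hCpos : (0:ℝ) < (C:ℝ) := by linarith
  have hC1 : 1 ≤ C := by exact_mod_cast le_trans (by norm_num : (1:ℝ) ≤ 499) hC499
  -- degrees as filter cards
  have hout : ∀ x : V, outDeg Adj x = (univ.filter (fun y => Adj x y)).card := by
    intro x; rw [outDeg, Nat.card_eq_fintype_card]; exact Fintype.card_subtype _
  have hin : ∀ x : V, inDeg Adj x = (univ.filter (fun y => Adj y x)).card := by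
    intro x; rw [inDeg, Nat.card_eq_fintype_card]; exact Fintype.card_subtype _
  obtain ⟨d, hd⟩ : ∃ k : ℕ, k = outDeg Adj v := ⟨_, rfl⟩
  rw [← hd] at hdv1 hdv2
  have hc₁Δ : (990:ℝ) ≤ c₁ * Δ := by
    nlinarith [mul_le_mul hc₁l hΔ (by norm_num : (0:ℝ) ≤ 1000) (by linarith : (0:ℝ) ≤ c₁)]
  have hdR : (990:ℝ) < (d:ℝ) := by linarith
  have hd2 : 2 ≤ d := by exact_mod_cast le_of_lt (lt_of_le_of_lt (by norm_num : (2:ℝ) ≤ 990) hdR)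
  obtain ⟨n, hn⟩ : ∃ k : ℕ, k = Fintype.card V := ⟨_, rfl⟩
  have hn2 : 2 ≤ n := by
    have h1 : (univ.filter (fun y => Adj v y)).card ≤ n := by
      rw [hn]; exact le_trans (Finset.card_filter_le _ _) (le_of_eq Finset.card_univ)
    rw [hout v] at hd
    omega
  obtain ⟨P, hP⟩ : ∃ s : Finset (V × V), s = (univ.filter (fun y => Adj v y)).offDiag := ⟨_, rfl⟩
  have hPcard : P.card = d * d - d := by
    rw [hP, Finset.offDiag_card, hd, hout v]
  obtain ⟨M, hM⟩ : ∃ k : ℕ, k = ⌊5 * (c₂ * Δ)⌋₊ := ⟨_, rfl⟩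
  obtain ⟨Tf, hTf⟩ : ∃ f : V → V → Finset V, f = fun u w => univ.filter
     (fun x => x ≠ u ∧ x ≠ w ∧ (Adj v x ∨ Adj u x ∨ Adj x u ∨ Adj w x ∨ Adj x w)) := ⟨_, rfl⟩
  have hTm : ∀ u w : V, (Tf u w).card ≤ M := by
    intro u w
    have hsub : Tf u w ⊆ ((((univ.filter (fun y => Adj v y)) ∪ (univ.filter (fun y => Adj u y)))
        ∪ (univ.filter (fun y => Adj y u))) ∪ (univ.filter (fun y => Adj w y)))
        ∪ (univ.filter (fun y => Adj y w)) := by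
      intro x hx
      simp only [hTf, mem_filter, mem_univ, true_and, mem_union] at hx ⊢
      tauto
    have h5 : (Tf u w).card ≤ (univ.filter (fun y => Adj v y)).card
        + (univ.filter (fun y => Adj u y)).card + (univ.filter (fun y => Adj y u)).card
        + (univ.filter (fun y => Adj w y)).card + (univ.filter (fun y => Adj y w)).card := by
      refine le_trans (Finset.card_le_card hsub) ?_
      refine le_trans (Finset.card_union_le _ _) ?_
      have := Finset.card_union_le ((((univ.filter (fun y => Adj v y)) ∪ (univ.filter (fun y => Adj u y)))
        ∪ (univ.filter (fun y => Adj y u)))) (univ.filter (fun y => Adj w y))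
      have h2 := Finset.card_union_le (((univ.filter (fun y => Adj v y)) ∪ (univ.filter (fun y => Adj u y)))) (univ.filter (fun y => Adj y u))
      have h3 := Finset.card_union_le (univ.filter (fun y => Adj v y)) (univ.filter (fun y => Adj u y))
      omega
    have hb1 : ((univ.filter (fun y => Adj v y)).card : ℝ) < c₂ * Δ := by
      rw [← hout, ← hd]; exact hdv2
    have hb2 : ((univ.filter (fun y => Adj u y)).card : ℝ) < c₂ * Δ := by
      rw [← hout]; exact (hdeg u).2.1
    have hb3 : ((univ.filter (fun y => Adj y u)).card : ℝ) < c₂ * Δ := by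
      rw [← hin]; exact (hdeg u).2.2.2
    have hb4 : ((univ.filter (fun y => Adj w y)).card : ℝ) < c₂ * Δ := by
      rw [← hout]; exact (hdeg w).2.1
    have hb5 : ((univ.filter (fun y => Adj y w)).card : ℝ) < c₂ * Δ := by
      rw [← hin]; exact (hdeg w).2.2.2
    rw [hM]
    apply Nat.le_floor
    have h5' : ((Tf u w).card : ℝ) ≤ ((univ.filter (fun y => Adj v y)).card : ℝ)
        + ((univ.filter (fun y => Adj u y)).card : ℝ) + ((univ.filter (fun y => Adj y u)).card : ℝ)
        + ((univ.filter (fun y => Adj w y)).card : ℝ) + ((univ.filter (fun y => Adj y w)).card : ℝ) := by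
      exact_mod_cast h5
    linarith
  have hTu : ∀ u w : V, u ∉ Tf u w := by intro u w; simp [hTf]
  have hTw : ∀ u w : V, w ∉ Tf u w := by intro u w; simp [hTf]
  have hTn : ∀ u w : V, u ≠ w → (Tf u w).card + 2 ≤ n := by
    intro u w huw
    have hdisj : Disjoint (Tf u w) ({u, w} : Finset V) := by
      rw [Finset.disjoint_right]
      intro x hx
      simp only [mem_insert, mem_singleton] at hx
      rcases hx with rfl | rfl
      · exact hTu _ _
      · exact hTw _ _
    have hle : (Tf u w ∪ {u, w}).card ≤ n := by
      rw [hn]; exact le_trans (Finset.card_le_card (subset_univ _)) (le_of_eq Finset.card_univ)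
    rw [Finset.card_union_of_disjoint hdisj, Finset.card_pair huw] at hle
    exact hle
  -- Xv as a filter card
  have hXv : ∀ σ : V → Fin C, Xv Adj σ v = (univ.filter (fun i : Fin C =>
      2 ≤ Nat.card {u : V // Adj v u ∧ σ u = i} ∧
      ∀ u : V, Adj v u → σ u = i → ¬ Uncolored Adj σ u)).card := by
    intro σ
    rw [Xv, Nat.card_eq_fintype_card]
    exact Fintype.card_subtype _
  -- at most two ordered pairs can witness the event, and they force the event
  have keybound : ∀ (σ : V → Fin C) (i : Fin C),
      (P.filter (fun p => FFst4 Adj v p.1 p.2 i σ)).card ≤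
        2 * (if (2 ≤ Nat.card {u : V // Adj v u ∧ σ u = i} ∧
          ∀ u : V, Adj v u → σ u = i → ¬ Uncolored Adj σ u) then 1 else 0) := by
    intro σ i
    rcases Finset.eq_empty_or_nonempty (P.filter (fun p => FFst4 Adj v p.1 p.2 i σ)) with he | hne
    · rw [he]; simp
    · obtain ⟨p, hp⟩ := hne
      have hF : FFst4 Adj v p.1 p.2 i σ := (Finset.mem_filter.1 hp).2
      have hEp : (2 ≤ Nat.card {u : V // Adj v u ∧ σ u = i} ∧
          ∀ u : V, Adj v u → σ u = i → ¬ Uncolored Adj σ u) := ⟨FFst4_two_le hF, FFst4_retain hF⟩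
      rw [if_pos hEp, mul_one]
      have hsub : P.filter (fun q => FFst4 Adj v q.1 q.2 i σ) ⊆ {p, (p.2, p.1)} := by
        intro q hq
        have hFq : FFst4 Adj v q.1 q.2 i σ := (Finset.mem_filter.1 hq).2
        simp only [Finset.mem_insert, Finset.mem_singleton]
        rcases FFst4_unique hF hFq with h | h
        · left; rw [← Prod.mk.eta (p := q), ← Prod.mk.eta (p := p)]; exact h
        · right; rw [← Prod.mk.eta (p := q)]; exact h
      exact le_trans (Finset.card_le_card hsub)
        (le_trans (Finset.card_insert_le _ _) (by simp))
  -- the key inequality over ℕ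
  have key : ∑ i : Fin C, ∑ p ∈ P, ((C - 1) ^ (Tf p.1 p.2).card * C ^ (n - 2 - (Tf p.1 p.2).card))
      ≤ 2 * ∑ σ : V → Fin C, Xv Adj σ v := by
    have hcount : ∀ (i : Fin C), ∀ p ∈ P,
        (C - 1) ^ (Tf p.1 p.2).card * C ^ (n - 2 - (Tf p.1 p.2).card)
          = (univ.filter (fun σ : V → Fin C => FFst4 Adj v p.1 p.2 i σ)).card := by
      intro i p hp
      rw [hP, Finset.mem_offDiag] at hp
      obtain ⟨hp1, hp2, hp3⟩ := hp
      rw [Finset.mem_filter] at hp1 hp2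
      have hp1' : Adj v p.1 := hp1.2
      have hp2' : Adj v p.2 := hp2.2
      rw [hn, ← st4_count C i p.1 p.2 hp3 (Tf p.1 p.2) (hTu _ _) (hTw _ _)]
      apply congrArg Finset.card
      apply Finset.filter_congr
      intro σ _
      constructor
      · rintro ⟨q1, q2, q3⟩
        exact ⟨hp1', hp2', hp3, q1, q2, fun x hxu hxw hrel => q3 x (by
          rw [hTf]; simp only [Finset.mem_filter, Finset.mem_univ, true_and]
          exact ⟨hxu, hxw, hrel⟩)⟩
      · rintro ⟨_, _, _, q4, q5, q6⟩
        refine ⟨q4, q5, fun x hx => ?_⟩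
        rw [hTf] at hx
        simp only [Finset.mem_filter, Finset.mem_univ, true_and] at hx
        exact q6 x hx.1 hx.2.1 hx.2.2
    calc ∑ i : Fin C, ∑ p ∈ P, ((C - 1) ^ (Tf p.1 p.2).card * C ^ (n - 2 - (Tf p.1 p.2).card))
        = ∑ i : Fin C, ∑ p ∈ P,
            (univ.filter (fun σ : V → Fin C => FFst4 Adj v p.1 p.2 i σ)).card :=
          Finset.sum_congr rfl fun i _ => Finset.sum_congr rfl fun p hp => hcount i p hp
      _ = ∑ i : Fin C, ∑ p ∈ P, ∑ σ : V → Fin C,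
            (if FFst4 Adj v p.1 p.2 i σ then 1 else 0) := by
          simp only [Finset.card_filter]
      _ = ∑ i : Fin C, ∑ σ : V → Fin C, ∑ p ∈ P,
            (if FFst4 Adj v p.1 p.2 i σ then 1 else 0) :=
          Finset.sum_congr rfl fun i _ => Finset.sum_comm
      _ = ∑ σ : V → Fin C, ∑ i : Fin C, ∑ p ∈ P,
            (if FFst4 Adj v p.1 p.2 i σ then 1 else 0) := Finset.sum_comm
      _ = ∑ σ : V → Fin C, ∑ i : Fin C,
            (P.filter (fun p => FFst4 Adj v p.1 p.2 i σ)).card := by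
          simp only [Finset.card_filter]
      _ ≤ ∑ σ : V → Fin C, ∑ i : Fin C,
            2 * (if (2 ≤ Nat.card {u : V // Adj v u ∧ σ u = i} ∧
              ∀ u : V, Adj v u → σ u = i → ¬ Uncolored Adj σ u) then 1 else 0) :=
          Finset.sum_le_sum fun σ _ => Finset.sum_le_sum fun i _ => keybound σ i
      _ = ∑ σ : V → Fin C, 2 * Xv Adj σ v := by
          refine Finset.sum_congr rfl fun σ _ => ?_
          rw [← Finset.mul_sum, ← Finset.card_filter, ← hXv σ]
      _ = 2 * ∑ σ : V → Fin C, Xv Adj σ v := by rw [Finset.mul_sum]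
  have keyR : (∑ i : Fin C, ∑ p ∈ P,
        (((C - 1) ^ (Tf p.1 p.2).card * C ^ (n - 2 - (Tf p.1 p.2).card) : ℕ) : ℝ))
      ≤ 2 * ∑ σ : V → Fin C, (Xv Adj σ v : ℝ) := by
    exact_mod_cast key
  have hr0 : (0:ℝ) ≤ 1 - 1/(C:ℝ) := by
    have h : 1/(C:ℝ) ≤ 1 := by rw [div_le_one hCpos]; linarith
    linarith
  have hr1 : 1 - 1/(C:ℝ) ≤ 1 := by
    have h : (0:ℝ) ≤ 1/(C:ℝ) := by positivity
    linarith
  have hlow : ∀ p ∈ P, (1 - 1/(C:ℝ)) ^ M * (C:ℝ)^(n-2)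
      ≤ (((C - 1) ^ (Tf p.1 p.2).card * C ^ (n - 2 - (Tf p.1 p.2).card) : ℕ) : ℝ) := by
    intro p hp
    have hp3 : p.1 ≠ p.2 := by rw [hP, Finset.mem_offDiag] at hp; exact hp.2.2
    have hm2 : (Tf p.1 p.2).card + 2 ≤ n := hTn _ _ hp3
    have hmM : (Tf p.1 p.2).card ≤ M := hTm _ _
    push_cast [Nat.cast_sub hC1]
    have hCm : ((C:ℝ) - 1) = (C:ℝ) * (1 - 1/(C:ℝ)) := by field_simp
    rw [hCm, mul_pow]
    have hpow : (C:ℝ)^((Tf p.1 p.2).card) * (C:ℝ)^(n - 2 - (Tf p.1 p.2).card) = (C:ℝ)^(n-2) := by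
      rw [← pow_add]; congr 1; omega
    calc (1 - 1/(C:ℝ)) ^ M * (C:ℝ)^(n-2)
        ≤ (1 - 1/(C:ℝ)) ^ ((Tf p.1 p.2).card) * (C:ℝ)^(n-2) :=
          mul_le_mul_of_nonneg_right (pow_le_pow_of_le_one hr0 hr1 hmM) (by positivity)
      _ = (C:ℝ)^((Tf p.1 p.2).card) * (1 - 1/(C:ℝ)) ^ ((Tf p.1 p.2).card)
            * (C:ℝ)^(n - 2 - (Tf p.1 p.2).card) := by
          rw [show (C:ℝ)^((Tf p.1 p.2).card) * (1 - 1/(C:ℝ)) ^ ((Tf p.1 p.2).card)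
              * (C:ℝ)^(n - 2 - (Tf p.1 p.2).card)
              = (1 - 1/(C:ℝ)) ^ ((Tf p.1 p.2).card)
                * ((C:ℝ)^((Tf p.1 p.2).card) * (C:ℝ)^(n - 2 - (Tf p.1 p.2).card)) from by ring,
            hpow]
  have hPc : ((P.card : ℕ) : ℝ) = (d:ℝ)*(d:ℝ) - (d:ℝ) := by
    rw [hPcard]
    have hdd : d ≤ d * d := Nat.le_mul_of_pos_left d (by omega)
    push_cast [Nat.cast_sub hdd]
    ring
  have hsum_low : (C:ℝ) * (((d:ℝ)*(d:ℝ) - (d:ℝ)) * ((1 - 1/(C:ℝ)) ^ M * (C:ℝ)^(n-2)))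
      ≤ ∑ i : Fin C, ∑ p ∈ P,
        (((C - 1) ^ (Tf p.1 p.2).card * C ^ (n - 2 - (Tf p.1 p.2).card) : ℕ) : ℝ) := by
    have inner : ∀ i : Fin C, ((d:ℝ)*(d:ℝ) - (d:ℝ)) * ((1 - 1/(C:ℝ)) ^ M * (C:ℝ)^(n-2))
        ≤ ∑ p ∈ P, (((C - 1) ^ (Tf p.1 p.2).card * C ^ (n - 2 - (Tf p.1 p.2).card) : ℕ) : ℝ) := by
      intro i
      have h1 := Finset.sum_le_sum hlow
      rw [Finset.sum_const] at h1
      calc ((d:ℝ)*(d:ℝ) - (d:ℝ)) * ((1 - 1/(C:ℝ)) ^ M * (C:ℝ)^(n-2))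
          = (P.card : ℝ) * ((1 - 1/(C:ℝ)) ^ M * (C:ℝ)^(n-2)) := by rw [hPc]
        _ = P.card • ((1 - 1/(C:ℝ)) ^ M * (C:ℝ)^(n-2)) := (nsmul_eq_mul _ _).symm
        _ ≤ _ := h1
    calc (C:ℝ) * (((d:ℝ)*(d:ℝ) - (d:ℝ)) * ((1 - 1/(C:ℝ)) ^ M * (C:ℝ)^(n-2)))
        = ∑ _i : Fin C, ((d:ℝ)*(d:ℝ) - (d:ℝ)) * ((1 - 1/(C:ℝ)) ^ M * (C:ℝ)^(n-2)) := by
          rw [Finset.sum_const, Finset.card_univ, Fintype.card_fin, nsmul_eq_mul]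
      _ ≤ _ := Finset.sum_le_sum fun i _ => inner i
  have hfinal1 : ((d:ℝ)*(d:ℝ) - (d:ℝ)) * (1 - 1/(C:ℝ))^M / (2*(C:ℝ)) ≤ expXv Adj C v := by
    have hexp : expXv Adj C v = (∑ σ : V → Fin C, (Xv Adj σ v : ℝ)) / (C:ℝ)^n := by
      unfold expXv; rw [← hn]
    rw [hexp, div_le_div_iff₀ (by linarith) (pow_pos hCpos n)]
    have hCn : (C:ℝ)^n = (C:ℝ)^2 * (C:ℝ)^(n-2) := by rw [← pow_add]; congr 1; omega
    calc ((d:ℝ)*(d:ℝ) - (d:ℝ)) * (1 - 1/(C:ℝ))^M * (C:ℝ)^n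
        = ((C:ℝ) * (((d:ℝ)*(d:ℝ) - (d:ℝ)) * ((1 - 1/(C:ℝ)) ^ M * (C:ℝ)^(n-2)))) * (C:ℝ) := by
          rw [hCn]; ring
      _ ≤ (∑ i : Fin C, ∑ p ∈ P,
            (((C - 1) ^ (Tf p.1 p.2).card * C ^ (n - 2 - (Tf p.1 p.2).card) : ℕ) : ℝ)) * (C:ℝ) :=
          mul_le_mul_of_nonneg_right hsum_low hCpos.le
      _ ≤ (2 * ∑ σ : V → Fin C, (Xv Adj σ v : ℝ)) * (C:ℝ) :=
          mul_le_mul_of_nonneg_right keyR hCpos.le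
      _ = (∑ σ : V → Fin C, (Xv Adj σ v : ℝ)) * (2*(C:ℝ)) := by ring
  clear key keyR keybound hXv hlow hsum_low hPc hTm hTn hTu hTw hout hin hdf hC hPcard hP hTf
  -- analytic estimate for (1 - 1/C)^M
  have hrM : (1.5:ℝ) * Real.exp (-11) ≤ (1 - 1/(C:ℝ)) ^ M := by
    have e1 : (C:ℝ)/((C:ℝ)-1) ≤ Real.exp (1/((C:ℝ)-1)) := by
      have h := Real.add_one_le_exp (1/((C:ℝ)-1))
      have hne : (C:ℝ) - 1 ≠ 0 := by linarith
      have h2 : (C:ℝ)/((C:ℝ)-1) = 1/((C:ℝ)-1) + 1 := by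
        field_simp
        ring
      rw [h2]; exact h
    have hqpos : (0:ℝ) < (C:ℝ)/((C:ℝ)-1) := div_pos hCpos (by linarith)
    have e2 : Real.exp (-(1/((C:ℝ)-1))) ≤ 1 - 1/(C:ℝ) := by
      rw [Real.exp_neg]
      have h3 := inv_anti₀ hqpos e1
      have h4 : ((C:ℝ)/((C:ℝ)-1))⁻¹ = 1 - 1/(C:ℝ) := by
        rw [inv_div]
        field_simp
      rw [← h4]; exact h3
    have e3 : Real.exp (-(1/((C:ℝ)-1))) ^ M ≤ (1 - 1/(C:ℝ)) ^ M :=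
      pow_le_pow_left₀ (Real.exp_nonneg _) e2 M
    have e4 : Real.exp (-(1/((C:ℝ)-1))) ^ M = Real.exp (-((M:ℝ)/((C:ℝ)-1))) := by
      rw [← Real.exp_nat_mul]; congr 1; ring
    have hMle : (M:ℝ) ≤ 5 * (c₂ * Δ) := by
      have h0 : (0:ℝ) ≤ 5 * (c₂ * Δ) :=
        mul_nonneg (by norm_num) (mul_nonneg (by linarith) (by linarith))
      rw [hM]; exact Nat.floor_le h0
    have e5 : (M:ℝ)/((C:ℝ)-1) ≤ 10.5 := by
      rw [div_le_iff₀ (by linarith : (0:ℝ) < (C:ℝ)-1)]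
      have h9 : c₂*Δ ≤ 1.01*Δ := mul_le_mul_of_nonneg_right hc₂u (by linarith)
      linarith
    have e6 : Real.exp (-(10.5:ℝ)) ≤ Real.exp (-((M:ℝ)/((C:ℝ)-1))) :=
      Real.exp_le_exp.2 (neg_le_neg e5)
    have e7 : Real.exp (-(10.5:ℝ)) = Real.exp 0.5 * Real.exp (-11) := by
      rw [← Real.exp_add]; norm_num
    have e8 : (1.5:ℝ) ≤ Real.exp 0.5 := by
      have := Real.add_one_le_exp (0.5:ℝ); linarith
    calc (1.5:ℝ) * Real.exp (-11) ≤ Real.exp 0.5 * Real.exp (-11) :=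
          mul_le_mul_of_nonneg_right e8 heps_pos.le
      _ = Real.exp (-(10.5:ℝ)) := e7.symm
      _ ≤ Real.exp (-((M:ℝ)/((C:ℝ)-1))) := e6
      _ = Real.exp (-(1/((C:ℝ)-1))) ^ M := e4.symm
      _ ≤ (1 - 1/(C:ℝ)) ^ M := e3
  -- final numeric assembly
  have hq1 : c₁ * (c₁*Δ) - c₁ ≤ ((d:ℝ)*(d:ℝ) - (d:ℝ))/(2*(C:ℝ)) := by
    have hnum : (c₁*Δ) * (c₁*Δ - 1) ≤ (d:ℝ)*(d:ℝ) - (d:ℝ) := by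
      nlinarith [mul_nonneg (le_of_lt (sub_pos.2 hdv1))
        (by linarith : (0:ℝ) ≤ (d:ℝ) + c₁*Δ - 1)]
    have h0 : (0:ℝ) ≤ (d:ℝ)*(d:ℝ) - (d:ℝ) := by nlinarith
    have h1 : (c₁*Δ) * (c₁*Δ - 1) / Δ ≤ ((d:ℝ)*(d:ℝ) - (d:ℝ))/(2*(C:ℝ)) :=
      div_le_div₀ h0 hnum (by linarith) (by linarith)
    have hΔne : Δ ≠ 0 := by linarith
    have h2 : (c₁*Δ) * (c₁*Δ - 1)/Δ = c₁*(c₁*Δ) - c₁ := by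
      field_simp
    rw [h2] at h1
    exact h1
  have hq2 : (c₁*(c₁*Δ) - c₁) * (1.5 * Real.exp (-11))
      ≤ ((d:ℝ)*(d:ℝ) - (d:ℝ)) * (1 - 1/(C:ℝ))^M / (2*(C:ℝ)) := by
    rw [show ((d:ℝ)*(d:ℝ) - (d:ℝ)) * (1 - 1/(C:ℝ))^M / (2*(C:ℝ))
        = (((d:ℝ)*(d:ℝ) - (d:ℝ))/(2*(C:ℝ))) * (1 - 1/(C:ℝ))^M from by ring]
    apply mul_le_mul hq1 hrM (by positivity) ?_
    apply div_nonneg (by nlinarith) (by linarith)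
  have hq3 : Δ / Real.exp 11 - 1 ≤ (c₁*(c₁*Δ) - c₁) * (1.5 * Real.exp (-11)) := by
    have hdiv : Δ / Real.exp 11 = Δ * Real.exp (-11) := by
      rw [Real.exp_neg]; ring
    rw [hdiv]
    nlinarith [mul_nonneg (mul_nonneg (by linarith : (0:ℝ) ≤ Δ) heps_pos.le)
        (by nlinarith [mul_self_nonneg (c₁ - 0.99)] : (0:ℝ) ≤ 1.5*c₁*c₁ - 1),
      mul_le_mul_of_nonneg_right hc₁u heps_pos.le, heps, heps_pos]
  linarith [hq2, hq3, hfinal1]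
end

section
/- Let D be a connected digraph without digons and let Δ̃ = Δ̃(D). If Δ̃ > 1, then the list chromatic number satisfies χ_l(D) ≤ ⌈Δ̃⌉. -/
/-- `D` is `L`-colorable for a list assignment `L`: each vertex can be given a color from
its list so that every color class is acyclic. -/
def LColorable {V : Type*} (Adj : V → V → Prop) (L : V → Finset ℕ) : Prop :=
  ∃ c : V → ℕ, (∀ v, c v ∈ L v) ∧ ∀ j : ℕ, AcyclicSet Adj {v | c v = j}

/-- `D` is `k`-choosable: `L`-colorable for every list assignment with lists of size `≥ k`. -/
def Choosable {V : Type*} (Adj : V → V → Prop) (k : ℕ) : Prop :=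
  ∀ L : V → Finset ℕ, (∀ v, k ≤ (L v).card) → LColorable Adj L

/-- The list chromatic number (choice number) of a digraph. -/
noncomputable def listChromNum {V : Type*} (Adj : V → V → Prop) : ℕ :=
  sInf {k | Choosable Adj k}


set_option linter.unusedSectionVars false

namespace Work

variable {V : Type} [Fintype V] [DecidableEq V]

def ua (Adj : V → V → Prop) (x y : V) : Prop := x ≠ y ∧ (Adj x y ∨ Adj y x)

lemma ua_symm {Adj : V → V → Prop} {x y : V} (h : ua Adj x y) : ua Adj y x :=
  ⟨h.1.symm, h.2.symm⟩

def rel (Adj : V → V → Prop) (U : Set V) (x y : V) : Prop :=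
  x ∈ U ∧ y ∈ U ∧ ua Adj x y

lemma rel_symm {Adj : V → V → Prop} {U : Set V} {x y : V} (h : rel Adj U x y) :
    rel Adj U y x := ⟨h.2.1, h.1, ua_symm h.2.2⟩

def reaches (Adj : V → V → Prop) (U : Set V) (x y : V) : Prop :=
  Relation.ReflTransGen (rel Adj U) x y

lemma reaches_refl (Adj : V → V → Prop) (U : Set V) (x : V) : reaches Adj U x x :=
  Relation.ReflTransGen.refl

lemma reaches_trans {Adj : V → V → Prop} {U : Set V} {x y z : V}
    (h1 : reaches Adj U x y) (h2 : reaches Adj U y z) : reaches Adj U x z :=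
  Relation.ReflTransGen.trans h1 h2

lemma reaches_symm {Adj : V → V → Prop} {U : Set V} {x y : V}
    (h : reaches Adj U x y) : reaches Adj U y x := by
  induction h with
  | refl => exact reaches_refl _ _ _
  | tail _ hr ih => exact reaches_trans (Relation.ReflTransGen.single (rel_symm hr)) ih

lemma reaches_mono {Adj : V → V → Prop} {U U' : Set V} (hUU : U ⊆ U') {x y : V}
    (h : reaches Adj U x y) : reaches Adj U' x y :=
  Relation.ReflTransGen.mono (r := rel Adj U) (p := rel Adj U') (fun _ _ hr => ⟨hUU hr.1, hUU hr.2.1, hr.2.2⟩) _ _ h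

def ConnOn (Adj : V → V → Prop) (U : Set V) : Prop :=
  ∀ x ∈ U, ∀ y ∈ U, reaches Adj U x y

open Classical in
noncomputable def NoutF (Adj : V → V → Prop) (v : V) : Finset V :=
  Finset.univ.filter (fun u => Adj v u)

open Classical in
noncomputable def NinF (Adj : V → V → Prop) (v : V) : Finset V :=
  Finset.univ.filter (fun u => Adj u v)

lemma mem_NoutF {Adj : V → V → Prop} {v u : V} : u ∈ NoutF Adj v ↔ Adj v u := by
  classical simp [NoutF]

lemma mem_NinF {Adj : V → V → Prop} {v u : V} : u ∈ NinF Adj v ↔ Adj u v := by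
  classical simp [NinF]

/-- The master greedy-coloring lemma. -/
theorem master (Adj : V → V → Prop)
    (hloop : ∀ v, ¬ Adj v v) (hdig : DigonFree Adj)
    (L : V → Finset ℕ)
    (idx : V → ℕ) (hidxinj : Function.Injective idx)
    (Φ : Finset V) (φ : V → ℕ) (req : V → Finset V)
    (hφL : ∀ v ∈ Φ, φ v ∈ L v)
    (hΦe : ∀ v ∈ Φ, ∀ x y : V, idx x < idx v → idx y < idx v → x = y)
    (hreqE : ∀ v, v ∉ Φ → ∀ u ∈ req v, idx u < idx v)
    (hside : ∀ v, v ∉ Φ →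
      (∀ u, idx u < idx v → Adj v u → u ∈ req v)
      ∨ (∀ u, idx u < idx v → Adj u v → u ∈ req v))
    (hcap : ∀ v, v ∉ Φ → ((req v).card < (L v).card
      ∨ ((req v).card ≤ (L v).card ∧
          ∃ u1 ∈ req v, ∃ u2 ∈ req v, u1 ∈ Φ ∧ u2 ∈ Φ ∧ u1 ≠ u2 ∧ φ u1 = φ u2)
      ∨ ((req v).card ≤ (L v).card ∧ ∃ u ∈ req v, u ∈ Φ ∧ φ u ∉ L v))) :
    LColorable Adj L := by
  classical
  obtain ⟨N, hN⟩ : ∃ N : ℕ, ∀ v : V, idx v < N :=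
    ⟨Finset.univ.sup idx + 1, fun v =>
      Nat.lt_succ_of_le (Finset.le_sup (Finset.mem_univ v))⟩
  have hex : ∀ i : ℕ, ∃ c : V → ℕ, ∀ v, idx v < i →
      (c v ∈ L v ∧ (v ∈ Φ → c v = φ v) ∧ (v ∉ Φ → ∀ u ∈ req v, c u ≠ c v)) := by
    intro i
    induction i with
    | zero => exact ⟨fun _ => 0, fun v hv => absurd hv (Nat.not_lt_zero _)⟩
    | succ i ih =>
      obtain ⟨c, hc⟩ := ih
      by_cases hi : ∃ v0 : V, idx v0 = i
      · obtain ⟨v0, hv0⟩ := hi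
        have hγ : ∃ γ : ℕ, γ ∈ L v0 ∧ (v0 ∈ Φ → γ = φ v0) ∧
            (v0 ∉ Φ → ∀ u ∈ req v0, c u ≠ γ) := by
          by_cases hΦ0 : v0 ∈ Φ
          · exact ⟨φ v0, hφL v0 hΦ0, fun _ => rfl, fun h => absurd hΦ0 h⟩
          · have hereq : ∀ u ∈ req v0, idx u < i := by
              intro u hu; have := hreqE v0 hΦ0 u hu; omega
            have hcreq : ∀ u ∈ req v0, c u ∈ L u ∧ (u ∈ Φ → c u = φ u) := by
              intro u hu; exact ⟨(hc u (hereq u hu)).1, (hc u (hereq u hu)).2.1⟩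
            have hne : (L v0 \ (req v0).image c).Nonempty := by
              rcases hcap v0 hΦ0 with h1 | ⟨hle, u1, hu1, u2, hu2, hΦ1, hΦ2, hne12, hφeq⟩ |
                ⟨hle, u, hu, hΦu, hφu⟩
              · by_contra hemp
                rw [Finset.not_nonempty_iff_eq_empty, Finset.sdiff_eq_empty_iff_subset] at hemp
                have h2 := Finset.card_le_card hemp
                have h3 := Finset.card_image_le (s := req v0) (f := c)
                omega
              · have hc1 : c u1 = φ u1 := (hcreq u1 hu1).2 hΦ1
                have hc2 : c u2 = φ u2 := (hcreq u2 hu2).2 hΦ2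
                have himg : (req v0).image c ⊆ ((req v0).erase u2).image c := by
                  intro x hx
                  rw [Finset.mem_image] at hx ⊢
                  obtain ⟨w, hw, hwx⟩ := hx
                  by_cases hwu : w = u2
                  · exact ⟨u1, Finset.mem_erase.2 ⟨hne12, hu1⟩, by
                      rw [hc1, hφeq, ← hc2, ← hwu, hwx]⟩
                  · exact ⟨w, Finset.mem_erase.2 ⟨hwu, hw⟩, hwx⟩
                by_contra hemp
                rw [Finset.not_nonempty_iff_eq_empty, Finset.sdiff_eq_empty_iff_subset] at hemp
                have h3 := Finset.card_le_card (hemp.trans himg)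
                have h4 := Finset.card_image_le (s := (req v0).erase u2) (f := c)
                have h5 := Finset.card_erase_of_mem hu2
                have h6 : 0 < (req v0).card := Finset.card_pos.2 ⟨u2, hu2⟩
                omega
              · have hcu : c u = φ u := (hcreq u hu).2 hΦu
                by_contra hemp
                rw [Finset.not_nonempty_iff_eq_empty, Finset.sdiff_eq_empty_iff_subset] at hemp
                have himg : L v0 ⊆ ((req v0).erase u).image c := by
                  intro x hx
                  have hx2 := hemp hx
                  rw [Finset.mem_image] at hx2 ⊢
                  obtain ⟨w, hw, hwx⟩ := hx2
                  by_cases hwu : w = u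
                  · exfalso; apply hφu; rw [← hcu, ← hwu, hwx]; exact hx
                  · exact ⟨w, Finset.mem_erase.2 ⟨hwu, hw⟩, hwx⟩
                have h3 := Finset.card_le_card himg
                have h4 := Finset.card_image_le (s := (req v0).erase u) (f := c)
                have h5 := Finset.card_erase_of_mem hu
                have h6 : 0 < (req v0).card := Finset.card_pos.2 ⟨u, hu⟩
                omega
            obtain ⟨γ, hγ⟩ := hne
            rw [Finset.mem_sdiff] at hγ
            refine ⟨γ, hγ.1, fun h => absurd h hΦ0, fun _ u hu hcu => ?_⟩
            exact hγ.2 (Finset.mem_image.2 ⟨u, hu, hcu⟩)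
        obtain ⟨γ, hγL, hγΦ, hγreq⟩ := hγ
        refine ⟨Function.update c v0 γ, ?_⟩
        intro v hv
        have hvv0 : v = v0 ∨ idx v < i := by
          by_cases h : v = v0
          · exact Or.inl h
          · right
            have : idx v ≠ i := fun hh => h (hidxinj (hh.trans hv0.symm))
            omega
        rcases hvv0 with rfl | hvlt
        · rw [Function.update_self]
          refine ⟨hγL, hγΦ, fun hΦ0 u hu => ?_⟩
          have hult : idx u < idx v := hreqE v hΦ0 u hu
          have huv : u ≠ v := fun h => by rw [h] at hult; omega
          rw [Function.update_of_ne huv]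
          exact hγreq hΦ0 u hu
        · have hvne : v ≠ v0 := fun h => by rw [h, hv0] at hvlt; omega
          rw [Function.update_of_ne hvne]
          obtain ⟨h1, h2, h3⟩ := hc v hvlt
          refine ⟨h1, h2, fun hΦv u hu => ?_⟩
          have hune : u ≠ v0 := by
            intro h
            have := hreqE v hΦv u hu
            rw [h, hv0] at this
            omega
          rw [Function.update_of_ne hune]
          exact h3 hΦv u hu
      · refine ⟨c, fun v hv => ?_⟩
        apply hc
        have : idx v ≠ i := fun h => hi ⟨v, h⟩
        omega
  obtain ⟨c, hc⟩ := hex N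
  have hcall := fun v => hc v (hN v)
  refine ⟨c, fun v => (hcall v).1, ?_⟩
  intro j v0 hv0 hcyc
  set A : Set V := {v | c v = j} with hA
  set r : V → V → Prop := (fun x y => x ∈ A ∧ y ∈ A ∧ Adj x y) with hr
  have CORE : ∀ w x y : V, idx x < idx w → idx y < idx w → Adj w x → Adj y w →
      c x = c w → c y = c w → False := by
    intro w x y hxw hyw hwx hyw2 hcx hcy
    by_cases hΦw : w ∈ Φ
    · have hxy := hΦe w hΦw x y hxw hyw
      subst hxy
      exact hdig w x hwx hyw2
    · rcases hside w hΦw with hs | hs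
      · exact (hcall w).2.2 hΦw x (hs x hxw hwx) hcx
      · exact (hcall w).2.2 hΦw y (hs y hyw hyw2) hcy
  classical
  set S : Finset V := Finset.univ.filter (fun z => Relation.TransGen r z z) with hS
  have hv0S : v0 ∈ S := by
    rw [hS, Finset.mem_filter]; exact ⟨Finset.mem_univ _, hcyc⟩
  obtain ⟨z0, hz0S, hz0max⟩ := Finset.exists_max_image S idx ⟨v0, hv0S⟩
  have hz0cyc : Relation.TransGen r z0 z0 := by
    have := Finset.mem_filter.1 hz0S; exact this.2
  obtain ⟨x, hrx, hxcyc⟩ : ∃ x : V, r z0 x ∧ Relation.TransGen r x x := by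
    obtain ⟨x, hzx, hxz⟩ := Relation.TransGen.head'_iff.1 hz0cyc
    exact ⟨x, hzx, Relation.TransGen.tail' hxz hzx⟩
  obtain ⟨y, hry, hycyc⟩ : ∃ y : V, r y z0 ∧ Relation.TransGen r y y := by
    obtain ⟨y, hzy, hyz⟩ := Relation.TransGen.tail'_iff.1 hz0cyc
    exact ⟨y, hyz, Relation.TransGen.head' hyz hzy⟩
  have hxS : x ∈ S := Finset.mem_filter.2 ⟨Finset.mem_univ _, hxcyc⟩
  have hyS : y ∈ S := Finset.mem_filter.2 ⟨Finset.mem_univ _, hycyc⟩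
  have hxne : x ≠ z0 := fun h => hloop z0 (h ▸ hrx.2.2)
  have hyne : y ≠ z0 := fun h => hloop z0 (h ▸ hry.2.2)
  have hxlt : idx x < idx z0 :=
    lt_of_le_of_ne (hz0max x hxS) (fun h => hxne (hidxinj h))
  have hylt : idx y < idx z0 :=
    lt_of_le_of_ne (hz0max y hyS) (fun h => hyne (hidxinj h))
  exact CORE z0 x y hxlt hylt hrx.2.2 hry.2.2
    (hrx.2.1.trans hrx.1.symm) (hry.1.trans hry.2.1.symm)

end Work

namespace Work

variable {V : Type} [Fintype V] [DecidableEq V]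

/-- Vertices earlier than `v` in the order `idx`. -/
def earlier (idx : V → ℕ) (v : V) : Finset V :=
  Finset.univ.filter (fun u => idx u < idx v)

lemma mem_earlier {idx : V → ℕ} {v u : V} : u ∈ earlier idx v ↔ idx u < idx v := by
  simp [earlier]

/-- Peeling order: if every nonempty set has a vertex of small out- or in-degree inside it,
there is an ordering where every vertex has small back-degree on one side. -/
theorem peelOrder (Adj : V → V → Prop) (k : ℕ)
    (hpeel : ∀ S : Finset V, S.Nonempty →
      ∃ v ∈ S, ((NoutF Adj v) ∩ S).card < k ∨ ((NinF Adj v) ∩ S).card < k) :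
    ∃ idx : V → ℕ, Function.Injective idx ∧
      ∀ v : V, ((NoutF Adj v) ∩ earlier idx v).card < k
        ∨ ((NinF Adj v) ∩ earlier idx v).card < k := by
  classical
  suffices h : ∀ (n : ℕ) (S : Finset V), S.card = n →
      ∃ f : V → ℕ, Set.InjOn f ↑S ∧ (∀ v ∈ S, f v < S.card) ∧
        ∀ v ∈ S, ((NoutF Adj v) ∩ (S.filter (fun u => f u < f v))).card < k
          ∨ ((NinF Adj v) ∩ (S.filter (fun u => f u < f v))).card < k by
    obtain ⟨f, hinj, _, hf⟩ := h (Finset.univ.card) Finset.univ rfl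
    refine ⟨f, fun x y hxy => hinj (Finset.mem_coe.2 (Finset.mem_univ x))
      (Finset.mem_coe.2 (Finset.mem_univ y)) hxy, fun v => ?_⟩
    have : earlier f v = Finset.univ.filter (fun u => f u < f v) := rfl
    rw [this]
    exact hf v (Finset.mem_univ v)
  intro n
  induction n using Nat.strong_induction_on with
  | _ n ih =>
    intro S hcard
    rcases Finset.eq_empty_or_nonempty S with rfl | hne
    · exact ⟨fun _ => 0, by simp, by simp, by simp⟩
    · obtain ⟨v0, hv0S, hv0⟩ := hpeel S hne
      have hlt : (S.erase v0).card < n := by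
        rw [← hcard]; exact Finset.card_erase_lt_of_mem hv0S
      obtain ⟨f0, hinj0, hbd0, hf0⟩ := ih _ hlt (S.erase v0) rfl
      set f : V → ℕ := Function.update f0 v0 (S.erase v0).card with hfdef
      have hfv0 : f v0 = (S.erase v0).card := Function.update_self _ _ _
      have hfne : ∀ u ∈ S.erase v0, f u = f0 u := fun u hu =>
        Function.update_of_ne (Finset.ne_of_mem_erase hu) _ _
      have hcards : (S.erase v0).card + 1 = S.card := Finset.card_erase_add_one hv0S
      have hcaseS : ∀ u ∈ S, u = v0 ∨ u ∈ S.erase v0 := by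
        intro u hu
        by_cases h : u = v0
        · exact Or.inl h
        · exact Or.inr (Finset.mem_erase.2 ⟨h, hu⟩)
      have hbd : ∀ u ∈ S, f u < S.card := by
        intro u hu
        rcases hcaseS u hu with rfl | hu'
        · rw [hfv0]; omega
        · rw [hfne u hu']; have := hbd0 u hu'; omega
      have hlt0 : ∀ u ∈ S.erase v0, f u < f v0 := by
        intro u hu; rw [hfne u hu, hfv0]; exact hbd0 u hu
      refine ⟨f, ?_, hbd, ?_⟩
      · intro x hx y hy hxy
        rcases hcaseS x hx with rfl | hx' <;> rcases hcaseS y hy with rfl | hy'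
        · rfl
        · exfalso; have := hlt0 y hy'; omega
        · exfalso; have := hlt0 x hx'; omega
        · exact hinj0 hx' hy' (by rwa [hfne x hx', hfne y hy'] at hxy)
      · intro v hv
        rcases hcaseS v hv with rfl | hv'
        · have hsub : S.filter (fun u => f u < f v) ⊆ S.erase v := by
            intro u hu
            rw [Finset.mem_filter] at hu
            refine Finset.mem_erase.2 ⟨fun h => ?_, hu.1⟩
            subst h; omega
          rcases hv0 with h | h
          · left
            calc ((NoutF Adj v) ∩ (S.filter (fun u => f u < f v))).card
                ≤ ((NoutF Adj v) ∩ S).card :=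
                  Finset.card_le_card (Finset.inter_subset_inter Finset.Subset.rfl
                    (hsub.trans (Finset.erase_subset _ _)))
              _ < k := h
          · right
            calc ((NinF Adj v) ∩ (S.filter (fun u => f u < f v))).card
                ≤ ((NinF Adj v) ∩ S).card :=
                  Finset.card_le_card (Finset.inter_subset_inter Finset.Subset.rfl
                    (hsub.trans (Finset.erase_subset _ _)))
              _ < k := h
        · have heq : S.filter (fun u => f u < f v) =
              (S.erase v0).filter (fun u => f0 u < f0 v) := by
            ext u
            rw [Finset.mem_filter, Finset.mem_filter]
            constructor
            · rintro ⟨huS, hufv⟩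
              have huv0 : u ≠ v0 := by
                intro h; subst h
                have := hlt0 v hv'
                omega
              have hue : u ∈ S.erase v0 := Finset.mem_erase.2 ⟨huv0, huS⟩
              exact ⟨hue, by rwa [hfne u hue, hfne v hv'] at hufv⟩
            · rintro ⟨hue, hufv⟩
              exact ⟨Finset.mem_of_mem_erase hue, by rwa [hfne u hue, hfne v hv']⟩
          rw [heq]
          exact hf0 v hv'

/-- Walks of given length towards `a` inside `U`. -/
def walkTo (Adj : V → V → Prop) (U : Set V) (a : V) : ℕ → V → Prop
  | 0, x => x = a
  | (n+1), x => ∃ y, rel Adj U x y ∧ walkTo Adj U a n y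

lemma walkTo_of_reaches {Adj : V → V → Prop} {U : Set V} {a x : V}
    (h : reaches Adj U x a) : ∃ n, walkTo Adj U a n x := by
  induction h using Relation.ReflTransGen.head_induction_on with
  | refl => exact ⟨0, rfl⟩
  | head hr _ ih =>
    obtain ⟨n, hn⟩ := ih
    exact ⟨n + 1, _, hr, hn⟩

/-- Ordering towards a target `a`: everyone else has a later neighbour; `a` is last. -/
theorem towardOrder (Adj : V → V → Prop) :
    ∀ (n : ℕ) (U : Finset V) (a : V), U.card = n → a ∈ U →
      (∀ x ∈ U, reaches Adj ↑U x a) →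
      ∃ f : V → ℕ, Set.InjOn f ↑U ∧
        (∀ v ∈ U, v ≠ a → ∃ w ∈ U, ua Adj v w ∧ f v < f w) ∧
        (∀ v ∈ U, v ≠ a → f v < f a) := by
  classical
  intro n
  induction n using Nat.strong_induction_on with
  | _ n ih =>
    intro U a hcard haU hconn
    by_cases hU1 : U.card ≤ 1
    · -- U = {a}
      have : U = {a} := by
        apply Finset.eq_singleton_iff_unique_mem.2
        refine ⟨haU, fun x hx => ?_⟩
        by_contra hxa
        have : ({x, a} : Finset V) ⊆ U := by
          intro y hy
          rcases Finset.mem_insert.1 hy with rfl | hy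
          · exact hx
          · rwa [Finset.mem_singleton.1 hy]
        have h2 := Finset.card_le_card this
        rw [Finset.card_insert_of_notMem (by simpa using hxa)] at h2
        simp at h2
        omega
      subst this
      exact ⟨fun _ => 0, by simp, by simp, by simp⟩
    · push_neg at hU1
      -- distance to a
      haveI : ∀ x : V, Decidable (∃ m, walkTo Adj (↑U) a m x) := fun x => Classical.dec _
      haveI : ∀ (x : V) (m : ℕ), Decidable (walkTo Adj (↑U) a m x) := fun x m => Classical.dec _
      have hWex : ∀ x ∈ U, ∃ m, walkTo Adj (↑U) a m x := fun x hx =>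
        walkTo_of_reaches (hconn x hx)
      set d : V → ℕ := fun x => if h : ∃ m, walkTo Adj (↑U) a m x then Nat.find h else 0
        with hd
      have hdW : ∀ x ∈ U, walkTo Adj (↑U) a (d x) x := by
        intro x hx
        have h := hWex x hx
        simp only [hd, dif_pos h]
        exact Nat.find_spec h
      have hdmin : ∀ x ∈ U, ∀ m, walkTo Adj (↑U) a m x → d x ≤ m := by
        intro x hx m hm
        have h := hWex x hx
        simp only [hd, dif_pos h]
        exact Nat.find_le hm
      have hda : d a = 0 := by
        have h : ∃ m, walkTo Adj (↑U) a m a := ⟨0, rfl⟩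
        simp only [hd, dif_pos h]
        exact Nat.le_zero.1 (Nat.find_le rfl)
      have hdzero : ∀ x ∈ U, d x = 0 → x = a := by
        intro x hx h0
        have := hdW x hx
        rwa [h0] at this
      have hstep : ∀ x ∈ U, x ≠ a → ∃ y ∈ U, ua Adj x y ∧ d y < d x := by
        intro x hx hxa
        have hW := hdW x hx
        have hd1 : d x ≠ 0 := fun h => hxa (hdzero x hx h)
        obtain ⟨m, hm⟩ : ∃ m, d x = m + 1 := ⟨d x - 1, by omega⟩
        rw [hm] at hW
        obtain ⟨y, hrxy, hWy⟩ := hW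
        have hyU : y ∈ U := hrxy.2.1
        have hdy : d y ≤ m := hdmin y hyU m hWy
        exact ⟨y, hyU, hrxy.2.2, by omega⟩
      -- pick w0 maximizing d over U.erase a
      have herasene : (U.erase a).Nonempty := by
        rw [← Finset.card_pos]
        have := Finset.card_erase_add_one haU
        omega
      obtain ⟨w0, hw0e, hw0max⟩ := Finset.exists_max_image (U.erase a) d herasene
      have hw0U : w0 ∈ U := Finset.mem_of_mem_erase hw0e
      have hw0a : w0 ≠ a := (Finset.mem_erase.1 hw0e).1
      have hmax : ∀ x ∈ U, d x ≤ d w0 := by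
        intro x hx
        by_cases hxa : x = a
        · subst hxa; rw [hda]; omega
        · exact hw0max x (Finset.mem_erase.2 ⟨hxa, hx⟩)
      -- U.erase w0 is still connected towards a
      have hconn' : ∀ x ∈ U.erase w0, reaches Adj (↑(U.erase w0)) x a := by
        have key : ∀ (m : ℕ), ∀ x ∈ U.erase w0, d x = m → reaches Adj (↑(U.erase w0)) x a := by
          intro m
          induction m using Nat.strong_induction_on with
          | _ m ihm =>
            intro x hxe hdx
            have hxU : x ∈ U := Finset.mem_of_mem_erase hxe
            by_cases hxa : x = a
            · subst hxa; exact reaches_refl _ _ _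
            · obtain ⟨y, hyU, huaxy, hdy⟩ := hstep x hxU hxa
              have hyw0 : y ≠ w0 := by
                intro h; subst h
                have h1 := hmax x hxU
                omega
              have hye : y ∈ U.erase w0 := Finset.mem_erase.2 ⟨hyw0, hyU⟩
              have ihy := ihm (d y) (by omega) y hye rfl
              exact Relation.ReflTransGen.head
                ⟨Finset.mem_coe.2 hxe, Finset.mem_coe.2 hye, huaxy⟩ ihy
        intro x hx
        exact key (d x) x hx rfl
      have hlt : (U.erase w0).card < n := by
        rw [← hcard]; exact Finset.card_erase_lt_of_mem hw0U
      have haE : a ∈ U.erase w0 := Finset.mem_erase.2 ⟨Ne.symm hw0a, haU⟩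
      obtain ⟨f0, hinj0, hlat0, hlast0⟩ := ih _ hlt (U.erase w0) a rfl haE hconn'
      set f : V → ℕ := fun v => if v = w0 then 0 else f0 v + 1 with hfdef
      have hfw0 : f w0 = 0 := by simp [hfdef]
      have hfne : ∀ v, v ≠ w0 → f v = f0 v + 1 := fun v hv => by simp [hfdef, hv]
      refine ⟨f, ?_, ?_, ?_⟩
      · intro x hx y hy hxy
        by_cases hxw : x = w0 <;> by_cases hyw : y = w0
        · rw [hxw, hyw]
        · rw [hxw] at hxy ⊢
          rw [hfw0, hfne y hyw] at hxy
          omega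
        · rw [hyw] at hxy ⊢
          rw [hfw0, hfne x hxw] at hxy
          omega
        · have hxe : x ∈ U.erase w0 := Finset.mem_erase.2 ⟨hxw, hx⟩
          have hye : y ∈ U.erase w0 := Finset.mem_erase.2 ⟨hyw, hy⟩
          rw [hfne x hxw, hfne y hyw] at hxy
          exact hinj0 (Finset.mem_coe.2 hxe) (Finset.mem_coe.2 hye) (by omega)
      · intro v hv hva
        by_cases hvw : v = w0
        · subst hvw
          obtain ⟨y, hyU, huay, hdy⟩ := hstep v hv hva
          have hyv : y ≠ v := by
            intro h; subst h; omega
          refine ⟨y, hyU, huay, ?_⟩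
          rw [hfw0, hfne y (by rintro rfl; omega)]
          omega
        · have hve : v ∈ U.erase w0 := Finset.mem_erase.2 ⟨hvw, hv⟩
          obtain ⟨w, hwE, huavw, hfvw⟩ := hlat0 v hve hva
          refine ⟨w, Finset.mem_of_mem_erase hwE, huavw, ?_⟩
          rw [hfne v hvw, hfne w (Finset.mem_erase.1 hwE).1]
          omega
      · intro v hv hva
        have hfa : f a = f0 a + 1 := hfne a (Ne.symm hw0a)
        by_cases hvw : v = w0
        · subst hvw; rw [hfw0, hfa]; omega
        · have hve : v ∈ U.erase w0 := Finset.mem_erase.2 ⟨hvw, hv⟩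
          rw [hfne v hvw, hfa]
          have := hlast0 v hve hva
          omega

end Work

namespace Work

variable {V : Type} [Fintype V] [DecidableEq V]

lemma LColorable_flip {Adj : V → V → Prop} {L : V → Finset ℕ}
    (h : LColorable (fun x y => Adj y x) L) : LColorable Adj L := by
  obtain ⟨c, h1, h2⟩ := h
  refine ⟨c, h1, fun j v hv hcyc => h2 j v hv ?_⟩
  apply Relation.transGen_swap.1
  exact Relation.TransGen.mono (r := fun x y => x ∈ {v | c v = j} ∧ y ∈ {v | c v = j} ∧ Adj x y) (fun x y hxy => ⟨hxy.2.1, hxy.1, hxy.2.2⟩) _ _ hcyc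

lemma ua_flip {Adj : V → V → Prop} {x y : V} :
    ua (fun a b => Adj b a) x y ↔ ua Adj x y := by
  unfold ua; tauto

lemma reaches_flip {Adj : V → V → Prop} {U : Set V} {x y : V}
    (h : reaches Adj U x y) : reaches (fun a b => Adj b a) U x y :=
  Relation.ReflTransGen.mono (r := rel Adj U) (p := rel (fun a b => Adj b a) U) (fun a b hab => ⟨hab.1, hab.2.1, ua_flip.2 hab.2.2⟩) _ _ h

lemma NoutF_flip {Adj : V → V → Prop} {v : V} :
    NoutF (fun a b => Adj b a) v = NinF Adj v := by
  ext u; rw [mem_NoutF, mem_NinF]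

lemma NinF_flip {Adj : V → V → Prop} {v : V} :
    NinF (fun a b => Adj b a) v = NoutF Adj v := by
  ext u; rw [mem_NinF, mem_NoutF]

/-- helper: intersecting with `earlier` while having a later element drops the card. -/
lemma card_inter_earlier_lt {idx : V → ℕ} {X : Finset V} {v w : V}
    (hw : w ∈ X) (hlater : idx v < idx w) :
    (X ∩ earlier idx v).card < X.card := by
  have hsub : X ∩ earlier idx v ⊆ X.erase w := by
    intro z hz
    rw [Finset.mem_inter] at hz
    refine Finset.mem_erase.2 ⟨?_, hz.1⟩
    intro h; subst h
    have := mem_earlier.1 hz.2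
    omega
  have h1 := Finset.card_le_card hsub
  have h2 := Finset.card_erase_of_mem hw
  have h3 : 0 < X.card := Finset.card_pos.2 ⟨w, hw⟩
  omega

/-- Scenario A : peeling / degeneracy. -/
theorem scenA (Adj : V → V → Prop)
    (hloop : ∀ v, ¬ Adj v v) (hdig : DigonFree Adj) (k : ℕ)
    (L : V → Finset ℕ) (hLk : ∀ v, k ≤ (L v).card)
    (hpeel : ∀ S : Finset V, S.Nonempty →
      ∃ v ∈ S, ((NoutF Adj v) ∩ S).card < k ∨ ((NinF Adj v) ∩ S).card < k) :
    LColorable Adj L := by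
  classical
  obtain ⟨idx, hinj, hidx⟩ := peelOrder Adj k hpeel
  set req : V → Finset V := fun v =>
    if ((NoutF Adj v) ∩ earlier idx v).card < k
    then (NoutF Adj v) ∩ earlier idx v else (NinF Adj v) ∩ earlier idx v with hreq
  apply master Adj hloop hdig L idx hinj ∅ (fun _ => 0) req
  · intro v hv; exact absurd hv (Finset.notMem_empty v)
  · intro v hv; exact absurd hv (Finset.notMem_empty v)
  · intro v _ u hu
    simp only [hreq] at hu
    by_cases h : ((NoutF Adj v) ∩ earlier idx v).card < k
    · rw [if_pos h] at hu
      exact mem_earlier.1 (Finset.mem_inter.1 hu).2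
    · rw [if_neg h] at hu
      exact mem_earlier.1 (Finset.mem_inter.1 hu).2
  · intro v _
    simp only [hreq]
    by_cases h : ((NoutF Adj v) ∩ earlier idx v).card < k
    · left; intro u hlt hadj
      rw [if_pos h]
      exact Finset.mem_inter.2 ⟨mem_NoutF.2 hadj, mem_earlier.2 hlt⟩
    · right; intro u hlt hadj
      rw [if_neg h]
      exact Finset.mem_inter.2 ⟨mem_NinF.2 hadj, mem_earlier.2 hlt⟩
  · intro v _
    left
    simp only [hreq]
    by_cases h : ((NoutF Adj v) ∩ earlier idx v).card < k
    · rw [if_pos h]; exact lt_of_lt_of_le h (hLk v)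
    · rw [if_neg h]
      rcases hidx v with h' | h'
      · exact absurd h' h
      · exact lt_of_lt_of_le h' (hLk v)

/-- Scenario W1 (out-version): one forced neighbour whose forced color avoids `L a`. -/
theorem scenW1out (Adj : V → V → Prop)
    (hloop : ∀ v, ¬ Adj v v) (hdig : DigonFree Adj) (k : ℕ)
    (L : V → Finset ℕ) (hLcard : ∀ v, (L v).card = k)
    (hreg : ∀ v, (NoutF Adj v).card = k ∧ (NinF Adj v).card = k)
    (a u : V) (γ : ℕ) (hu : Adj a u) (hγu : γ ∈ L u) (hγa : γ ∉ L a)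
    (hconn : ∀ x : V, x ≠ u → reaches Adj {y | y ≠ u} x a) :
    LColorable Adj L := by
  classical
  have hau : a ≠ u := fun h => hloop a (h ▸ hu)
  set U : Finset V := Finset.univ.erase u with hU
  have hUset : (↑U : Set V) = {y | y ≠ u} := by
    ext x; simp [hU]
  have haU : a ∈ U := Finset.mem_erase.2 ⟨hau, Finset.mem_univ _⟩
  have hconnU : ∀ x ∈ U, reaches Adj ↑U x a := by
    intro x hx
    rw [hUset]
    exact hconn x (Finset.mem_erase.1 hx).1
  obtain ⟨f, hinjf, hlat, hlast⟩ := towardOrder Adj U.card U a rfl haU hconnU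
  set idx : V → ℕ := fun v => if v = u then 0 else f v + 1 with hidxd
  have hidxu : idx u = 0 := by simp [hidxd]
  have hidxne : ∀ v, v ≠ u → idx v = f v + 1 := fun v hv => by simp [hidxd, hv]
  have hinj : Function.Injective idx := by
    intro x y hxy
    by_cases hx : x = u <;> by_cases hy : y = u
    · rw [hx, hy]
    · rw [hx] at hxy ⊢; rw [hidxu, hidxne y hy] at hxy; omega
    · rw [hy] at hxy ⊢; rw [hidxu, hidxne x hx] at hxy; omega
    · rw [hidxne x hx, hidxne y hy] at hxy
      exact hinjf (Finset.mem_coe.2 (Finset.mem_erase.2 ⟨hx, Finset.mem_univ _⟩))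
        (Finset.mem_coe.2 (Finset.mem_erase.2 ⟨hy, Finset.mem_univ _⟩)) (by omega)
  have halast : ∀ w : V, w ≠ a → idx w < idx a := by
    intro w hw
    rw [hidxne a hau]
    by_cases hwu : w = u
    · rw [hwu, hidxu]; omega
    · rw [hidxne w hwu]
      have := hlast w (Finset.mem_erase.2 ⟨hwu, Finset.mem_univ _⟩) hw
      omega
  set req : V → Finset V := fun v =>
    if v = a then NoutF Adj a else
    (if ((NoutF Adj v) ∩ earlier idx v).card < k
     then (NoutF Adj v) ∩ earlier idx v else (NinF Adj v) ∩ earlier idx v) with hreq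
  have hor : ∀ v : V, v ≠ u → v ≠ a →
      ((NoutF Adj v) ∩ earlier idx v).card < k ∨
      ((NinF Adj v) ∩ earlier idx v).card < k := by
    intro v hvu hva
    obtain ⟨w, hwU, hwua, hfvw⟩ := hlat v (Finset.mem_erase.2 ⟨hvu, Finset.mem_univ _⟩) hva
    have hwu : w ≠ u := (Finset.mem_erase.1 hwU).1
    have hlater : idx v < idx w := by
      rw [hidxne v hvu, hidxne w hwu]; omega
    rcases hwua.2 with hadj | hadj
    · left
      have := card_inter_earlier_lt (X := NoutF Adj v) (mem_NoutF.2 hadj) hlater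
      rw [(hreg v).1] at this; exact this
    · right
      have := card_inter_earlier_lt (X := NinF Adj v) (mem_NinF.2 hadj) hlater
      rw [(hreg v).2] at this; exact this
  apply master Adj hloop hdig L idx hinj {u} (fun _ => γ) req
  · intro v hv; rw [Finset.mem_singleton] at hv; subst hv; exact hγu
  · intro v hv; rw [Finset.mem_singleton] at hv; subst hv
    intro x y hx hy
    rw [hidxu] at hx; omega
  · intro v hv u' hu'
    rw [Finset.mem_singleton] at hv
    simp only [hreq] at hu'
    by_cases hva : v = a
    · subst hva
      rw [if_pos rfl] at hu'
      have hne' : u' ≠ v := fun h => hloop v (by rw [h] at hu'; exact mem_NoutF.1 hu')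
      exact halast u' hne'
    · rw [if_neg hva] at hu'
      by_cases h : ((NoutF Adj v) ∩ earlier idx v).card < k
      · rw [if_pos h] at hu'; exact mem_earlier.1 (Finset.mem_inter.1 hu').2
      · rw [if_neg h] at hu'; exact mem_earlier.1 (Finset.mem_inter.1 hu').2
  · intro v hv
    rw [Finset.mem_singleton] at hv
    simp only [hreq]
    by_cases hva : v = a
    · subst hva
      left; intro w _ hadj
      rw [if_pos rfl]; exact mem_NoutF.2 hadj
    · rw [if_neg hva]
      by_cases h : ((NoutF Adj v) ∩ earlier idx v).card < k
      · left; intro w hlt hadj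
        rw [if_pos h]
        exact Finset.mem_inter.2 ⟨mem_NoutF.2 hadj, mem_earlier.2 hlt⟩
      · right; intro w hlt hadj
        rw [if_neg h]
        exact Finset.mem_inter.2 ⟨mem_NinF.2 hadj, mem_earlier.2 hlt⟩
  · intro v hv
    rw [Finset.mem_singleton] at hv
    simp only [hreq]
    by_cases hva : v = a
    · subst hva
      right; right
      rw [if_pos rfl]
      refine ⟨by rw [(hreg v).1, hLcard], u, mem_NoutF.2 hu, Finset.mem_singleton.2 rfl, hγa⟩
    · left
      rw [if_neg hva]
      by_cases h : ((NoutF Adj v) ∩ earlier idx v).card < k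
      · rw [if_pos h, hLcard]; exact h
      · rw [if_neg h, hLcard]
        rcases hor v hv hva with h' | h'
        · exact absurd h' h
        · exact h'

/-- Scenario W2 (out-version): two forced out-neighbours of `a` with a common color. -/
theorem scenW2out (Adj : V → V → Prop)
    (hloop : ∀ v, ¬ Adj v v) (hdig : DigonFree Adj) (k : ℕ)
    (L : V → Finset ℕ) (hLcard : ∀ v, (L v).card = k)
    (hreg : ∀ v, (NoutF Adj v).card = k ∧ (NinF Adj v).card = k)
    (a u1 u2 : V) (γ : ℕ) (hne12 : u1 ≠ u2)
    (hu1 : Adj a u1) (hu2 : Adj a u2) (hγ1 : γ ∈ L u1) (hγ2 : γ ∈ L u2)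
    (hconn : ∀ x : V, x ≠ u1 → x ≠ u2 → reaches Adj {y | y ≠ u1 ∧ y ≠ u2} x a) :
    LColorable Adj L := by
  classical
  have hau1 : a ≠ u1 := fun h => hloop a (h ▸ hu1)
  have hau2 : a ≠ u2 := fun h => hloop a (h ▸ hu2)
  set U : Finset V := (Finset.univ.erase u1).erase u2 with hU
  have hmemU : ∀ x : V, x ∈ U ↔ (x ≠ u1 ∧ x ≠ u2) := by
    intro x
    rw [hU, Finset.mem_erase, Finset.mem_erase]
    constructor
    · rintro ⟨h2, h1, _⟩; exact ⟨h1, h2⟩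
    · rintro ⟨h1, h2⟩; exact ⟨h2, h1, Finset.mem_univ _⟩
  have hUset : (↑U : Set V) = {y : V | y ≠ u1 ∧ y ≠ u2} := by
    ext x; rw [Finset.mem_coe, hmemU]; rfl
  have haU : a ∈ U := (hmemU a).2 ⟨hau1, hau2⟩
  have hconnU : ∀ x ∈ U, reaches Adj ↑U x a := by
    intro x hx
    rw [hUset]
    obtain ⟨h1, h2⟩ := (hmemU x).1 hx
    exact hconn x h1 h2
  obtain ⟨f, hinjf, hlat, hlast⟩ := towardOrder Adj U.card U a rfl haU hconnU
  set idx : V → ℕ := fun v => if v = u1 then 0 else if v = u2 then 1 else f v + 2 with hidxd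
  have hidx1 : idx u1 = 0 := by simp [hidxd]
  have hidx2 : idx u2 = 1 := by simp [hidxd, hne12.symm, Ne.symm hne12]
  have hidxne : ∀ v, v ≠ u1 → v ≠ u2 → idx v = f v + 2 := fun v h1 h2 => by
    simp [hidxd, h1, h2]
  have hinj : Function.Injective idx := by
    intro x y hxy
    by_cases hx1 : x = u1 <;> by_cases hy1 : y = u1 <;>
      by_cases hx2 : x = u2 <;> by_cases hy2 : y = u2
    all_goals first
      | (rw [hx1, hy1])
      | (rw [hx2, hy2])
      | (exfalso; subst_vars; revert hxy;
         simp_all [hidx1, hidx2, hidxne]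
         <;> omega)
      | (have hxe : x ∈ U := (hmemU x).2 ⟨hx1, hx2⟩
         have hye : y ∈ U := (hmemU y).2 ⟨hy1, hy2⟩
         rw [hidxne x hx1 hx2, hidxne y hy1 hy2] at hxy
         exact hinjf (Finset.mem_coe.2 hxe) (Finset.mem_coe.2 hye) (by omega))
  have halast : ∀ w : V, w ≠ a → idx w < idx a := by
    intro w hw
    rw [hidxne a hau1 hau2]
    by_cases hw1 : w = u1
    · rw [hw1, hidx1]; omega
    · by_cases hw2 : w = u2
      · rw [hw2, hidx2]; omega
      · rw [hidxne w hw1 hw2]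
        have := hlast w ((hmemU w).2 ⟨hw1, hw2⟩) hw
        omega
  set req : V → Finset V := fun v =>
    if v = a then NoutF Adj a else
    (if ((NoutF Adj v) ∩ earlier idx v).card < k
     then (NoutF Adj v) ∩ earlier idx v else (NinF Adj v) ∩ earlier idx v) with hreq
  have hor : ∀ v : V, v ≠ u1 → v ≠ u2 → v ≠ a →
      ((NoutF Adj v) ∩ earlier idx v).card < k ∨
      ((NinF Adj v) ∩ earlier idx v).card < k := by
    intro v hv1 hv2 hva
    obtain ⟨w, hwU, hwua, hfvw⟩ := hlat v ((hmemU v).2 ⟨hv1, hv2⟩) hva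
    obtain ⟨hw1, hw2⟩ := (hmemU w).1 hwU
    have hlater : idx v < idx w := by
      rw [hidxne v hv1 hv2, hidxne w hw1 hw2]; omega
    rcases hwua.2 with hadj | hadj
    · left
      have := card_inter_earlier_lt (X := NoutF Adj v) (mem_NoutF.2 hadj) hlater
      rw [(hreg v).1] at this; exact this
    · right
      have := card_inter_earlier_lt (X := NinF Adj v) (mem_NinF.2 hadj) hlater
      rw [(hreg v).2] at this; exact this
  have hΦmem : ∀ v : V, v ∈ ({u1, u2} : Finset V) ↔ v = u1 ∨ v = u2 := by
    intro v; simp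
  apply master Adj hloop hdig L idx hinj {u1, u2} (fun _ => γ) req
  · intro v hv
    rcases (hΦmem v).1 hv with rfl | rfl
    · exact hγ1
    · exact hγ2
  · intro v hv x y hx hy
    rcases (hΦmem v).1 hv with rfl | rfl
    · rw [hidx1] at hx; omega
    · rw [hidx2] at hx hy
      have hx0 : idx x = 0 := by omega
      have hy0 : idx y = 0 := by omega
      exact hinj (hx0.trans hy0.symm)
  · intro v hv u' hu'
    simp only [hreq] at hu'
    by_cases hva : v = a
    · subst hva
      rw [if_pos rfl] at hu'
      have hne' : u' ≠ v := fun h => hloop v (by rw [h] at hu'; exact mem_NoutF.1 hu')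
      exact halast u' hne'
    · rw [if_neg hva] at hu'
      by_cases h : ((NoutF Adj v) ∩ earlier idx v).card < k
      · rw [if_pos h] at hu'; exact mem_earlier.1 (Finset.mem_inter.1 hu').2
      · rw [if_neg h] at hu'; exact mem_earlier.1 (Finset.mem_inter.1 hu').2
  · intro v hv
    simp only [hreq]
    by_cases hva : v = a
    · subst hva
      left; intro w _ hadj
      rw [if_pos rfl]; exact mem_NoutF.2 hadj
    · rw [if_neg hva]
      by_cases h : ((NoutF Adj v) ∩ earlier idx v).card < k
      · left; intro w hlt hadj
        rw [if_pos h]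
        exact Finset.mem_inter.2 ⟨mem_NoutF.2 hadj, mem_earlier.2 hlt⟩
      · right; intro w hlt hadj
        rw [if_neg h]
        exact Finset.mem_inter.2 ⟨mem_NinF.2 hadj, mem_earlier.2 hlt⟩
  · intro v hv
    simp only [hreq]
    by_cases hva : v = a
    · subst hva
      right; left
      rw [if_pos rfl]
      refine ⟨by rw [(hreg v).1, hLcard], u1, mem_NoutF.2 hu1, u2, mem_NoutF.2 hu2, ?_, ?_,
        hne12, ?_⟩
      · exact (hΦmem u1).2 (Or.inl rfl)
      · exact (hΦmem u2).2 (Or.inr rfl)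
      · trivial
    · left
      rw [if_neg hva]
      have hv' : ¬(v = u1 ∨ v = u2) := fun h => hv ((hΦmem v).2 h)
      push_neg at hv'
      by_cases h : ((NoutF Adj v) ∩ earlier idx v).card < k
      · rw [if_pos h, hLcard]; exact h
      · rw [if_neg h, hLcard]
        rcases hor v hv'.1 hv'.2 hva with h' | h'
        · exact absurd h' h
        · exact h'

end Work

namespace Work

variable {V : Type} [Fintype V] [DecidableEq V]

lemma reaches_right_mem {Adj : V → V → Prop} {U : Set V} {x y : V}
    (hx : x ∈ U) (h : reaches Adj U x y) : y ∈ U := by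
  induction h with
  | refl => exact hx
  | tail _ hr _ => exact hr.2.1

lemma comp_conn (Adj : V → V → Prop) {U : Set V} {x0 : V} :
    ConnOn Adj {t | reaches Adj U x0 t} := by
  set A := {t | reaches Adj U x0 t} with hA
  have key : ∀ t, reaches Adj U x0 t → reaches Adj A x0 t := by
    intro t ht
    induction ht with
    | refl => exact reaches_refl _ _ _
    | @tail b t hxb hr ih =>
      exact ih.tail ⟨hxb, Relation.ReflTransGen.tail hxb hr, hr.2.2⟩
  intro s hs t ht
  exact reaches_trans (reaches_symm (key s hs)) (key t ht)

lemma comp_closed {Adj : V → V → Prop} {U : Set V} {x0 : V} {x y : V}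
    (hx : x ∈ {t | reaches Adj U x0 t}) (hy : y ∈ U) (hxU : x ∈ U) (hxy : ua Adj x y) :
    y ∈ {t | reaches Adj U x0 t} :=
  Relation.ReflTransGen.tail hx ⟨hxU, hy, hxy⟩

lemma nonreacher {Adj : V → V → Prop} {U : Set V} {z : V} (hz : z ∈ U)
    (h : ¬ ConnOn Adj U) : ∃ x ∈ U, ¬ reaches Adj U x z := by
  by_contra hall
  push_neg at hall
  apply h
  intro s hs t ht
  exact reaches_trans (hall s hs) (reaches_symm (hall t ht))

lemma connOn_of_reach_c {Adj : V → V → Prop} {U : Set V} {c : V}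
    (hall : ∀ x ∈ U, reaches Adj U x c) : ConnOn Adj U :=
  fun s hs t ht => reaches_trans (hall s hs) (reaches_symm (hall t ht))

lemma exists_min_ncard {F : Set (Set V)} (h : F.Nonempty) :
    ∃ A ∈ F, ∀ A' ∈ F, A.ncard ≤ A'.ncard := by
  classical
  exact Set.exists_min_image F Set.ncard (Set.toFinite F) h

/-- Construction of the "endblock" structure `B` with attachment vertex `c`. -/
theorem getB (Adj : V → V → Prop) [Nonempty V]
    (hconnU : ConnOn Adj Set.univ) (hbig : ∃ x y : V, x ≠ y) :
    ∃ (B : Set V) (c : V), c ∈ B ∧ (B \ {c}).Nonempty ∧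
      (∀ v ∈ B \ {c}, ∀ y, ua Adj v y → y ∈ B) ∧
      (∀ v ∈ B \ {c}, ConnOn Adj {x | x ≠ v}) ∧
      (ConnOn Adj (B \ {c})) ∧
      (∀ w ∈ B, ConnOn Adj (B \ {w})) ∧
      (∀ x, x ∉ B → reaches Adj ((Set.univ \ B) ∪ {c}) x c) := by
  classical
  by_cases hcut : ∀ u : V, ConnOn Adj {x | x ≠ u}
  · obtain ⟨x0, y0, hxy0⟩ := hbig
    refine ⟨Set.univ, x0, Set.mem_univ _, ⟨y0, Set.mem_univ _, fun h => hxy0 (Set.eq_of_mem_singleton h).symm⟩,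
      fun _ _ _ _ => Set.mem_univ _, fun v _ => hcut v, ?_, ?_, fun x hx => absurd (Set.mem_univ x) hx⟩
    · have : (Set.univ \ {x0} : Set V) = {x | x ≠ x0} := by ext t; simp
      rw [this]; exact hcut x0
    · intro w _
      have : (Set.univ \ {w} : Set V) = {x | x ≠ w} := by ext t; simp
      rw [this]; exact hcut w
  · push_neg at hcut
    obtain ⟨z1, hz1⟩ := hcut
    set Fam1 : Set (Set V) := {A | ∃ z : V, z ∉ A ∧ A.Nonempty ∧
      (∀ x ∈ A, ∀ y, ua Adj x y → y ∈ A ∪ {z}) ∧ ConnOn Adj A} with hFam1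
    have hFam1ne : Fam1.Nonempty := by
      -- any component of {x ≠ z1} works; there is some x1 ≠ z1
      obtain ⟨x0, y0, hxy0⟩ := hbig
      obtain ⟨x1, hx1⟩ : ∃ x1 : V, x1 ≠ z1 := by
        by_cases h : x0 = z1
        · exact ⟨y0, by rw [← h]; exact fun hh => hxy0 hh.symm⟩
        · exact ⟨x0, h⟩
      set U : Set V := {x | x ≠ z1} with hU
      set A : Set V := {t | reaches Adj U x1 t} with hA
      refine ⟨A, z1, ?_, ⟨x1, reaches_refl _ _ _⟩, ?_, comp_conn Adj⟩
      · intro hz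
        have := reaches_right_mem (show x1 ∈ U from hx1) hz
        exact this rfl
      · intro x hx y hxy
        by_cases hyz : y = z1
        · right; exact hyz
        · left
          have hxU : x ∈ U := by
            by_cases hxx : x = x1
            · rw [hxx]; exact hx1
            · exact reaches_right_mem (show x1 ∈ U from hx1) hx
          exact comp_closed hx (show y ∈ U from hyz) hxU hxy
    obtain ⟨A0, hA0F, hA0min⟩ := exists_min_ncard hFam1ne
    obtain ⟨z0, hz0A, hA0ne, hA0cl, hA0conn⟩ := hA0F
    set B : Set V := A0 ∪ {z0} with hB
    have hcB : z0 ∈ B := Or.inr rfl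
    have hBd : B \ {z0} = A0 := by
      ext t
      simp only [hB, Set.mem_diff, Set.mem_union, Set.mem_singleton_iff]
      constructor
      · rintro ⟨h1 | h1, h2⟩
        · exact h1
        · exact absurd h1 h2
      · intro h
        exact ⟨Or.inl h, fun hh => hz0A (hh ▸ h)⟩
    -- Q5 claim
    have hQ5' : ∀ x ∈ (Set.univ \ A0 : Set V), reaches Adj (Set.univ \ A0) x z0 := by
      have main : ∀ x : V, reaches Adj Set.univ x z0 → x ∉ A0 →
          reaches Adj (Set.univ \ A0) x z0 := by
        intro x hglob
        induction hglob using Relation.ReflTransGen.head_induction_on with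
        | refl => intro _; exact reaches_refl _ _ _
        | head hts hrest ih =>
          rename_i t s
          intro htA
          by_cases hsA : s ∈ A0
          · have hcl := hA0cl s hsA t (ua_symm hts.2.2)
            rcases hcl with h | h
            · exact absurd h htA
            · rw [Set.mem_singleton_iff.1 h]
              exact reaches_refl _ _ _
          · exact Relation.ReflTransGen.head
              ⟨⟨Set.mem_univ _, htA⟩, ⟨Set.mem_univ _, hsA⟩, hts.2.2⟩ (ih hsA)
      intro x hx
      exact main x (hconnU x (Set.mem_univ _) z0 (Set.mem_univ _)) hx.2
    have hQ5 : ∀ x, x ∉ B → reaches Adj ((Set.univ \ B) ∪ {z0}) x z0 := by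
      intro x hx
      have hset : ((Set.univ \ B) ∪ {z0} : Set V) = Set.univ \ A0 := by
        ext t
        simp only [Set.mem_union, Set.mem_diff, Set.mem_singleton_iff, Set.mem_univ,
          true_and, hB, Set.mem_union]
        constructor
        · rintro (h | h)
          · exact fun ht => h (Or.inl ht)
          · exact fun ht => hz0A (h ▸ ht)
        · intro h
          by_cases ht : t = z0
          · exact Or.inr ht
          · exact Or.inl (fun hh => by
              rcases hh with hh | hh
              · exact h hh
              · exact ht hh)
      rw [hset]
      apply hQ5'
      exact ⟨Set.mem_univ _, fun hh => hx (Or.inl hh)⟩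
    -- Q2
    have hQ2 : ∀ v ∈ A0, ConnOn Adj {x | x ≠ v} := by
      intro v hvA
      by_contra hnc
      have hz0v : z0 ≠ v := fun h => hz0A (h ▸ hvA)
      obtain ⟨xs, hxs, hxsn⟩ := nonreacher (show z0 ∈ {x | x ≠ v} from hz0v) hnc
      set U : Set V := {x | x ≠ v} with hU
      set Astar : Set V := {t | reaches Adj U xs t} with hAstar
      have hsub : Astar ⊆ A0 \ {v} := by
        intro t ht
        have htv : t ≠ v := by
          by_cases hh : t = xs
          · rw [hh]; exact hxs
          · exact reaches_right_mem hxs ht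
        have htz : t ≠ z0 := by
          intro h
          exact hxsn (h ▸ ht)
        constructor
        · by_contra htA
          -- t ∉ A0: use hQ5': reach z0 within univ \ A0 ⊆ U
          have h5 := hQ5' t ⟨Set.mem_univ _, htA⟩
          have hmono : (Set.univ \ A0 : Set V) ⊆ U := by
            intro s hs
            exact fun hh => hs.2 (hh ▸ hvA)
          have := reaches_mono hmono h5
          exact hxsn (reaches_trans ht this)
        · exact htv
      have hmem : Astar ∈ Fam1 := by
        refine ⟨v, ?_, ⟨xs, reaches_refl _ _ _⟩, ?_, comp_conn Adj⟩
        · intro hv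
          exact ((hsub hv).2 rfl)
        · intro x hx y hxy
          by_cases hyv : y = v
          · right; exact hyv
          · left
            have hxU : x ∈ U := (hsub hx).2
            exact comp_closed hx (show y ∈ U from hyv) hxU hxy
      have h1 := hA0min Astar hmem
      have h2 : Astar.ncard ≤ (A0 \ {v}).ncard := Set.ncard_le_ncard hsub (Set.toFinite _)
      have h3 : (A0 \ {v}).ncard < A0.ncard := Set.ncard_diff_singleton_lt_of_mem hvA (Set.toFinite _)
      omega
    -- Q4
    have hQ4 : ∀ w ∈ B, ConnOn Adj (B \ {w}) := by
      intro w hwB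
      by_cases hwz : w = z0
      · rw [hwz, hBd]; exact hA0conn
      · have hwA : w ∈ A0 := by
          rcases hwB with h | h
          · exact h
          · exact absurd (Set.mem_singleton_iff.1 h) hwz
        by_contra hnc
        have hz0m : z0 ∈ B \ {w} := ⟨hcB, fun h => hwz (Set.mem_singleton_iff.1 h).symm⟩
        obtain ⟨xs, hxs, hxsn⟩ := nonreacher hz0m hnc
        set U : Set V := B \ {w} with hU
        set Astar : Set V := {t | reaches Adj U xs t} with hAstar
        have hsubU : Astar ⊆ U := by
          intro t ht
          by_cases hh : t = xs
          · rw [hh]; exact hxs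
          · exact reaches_right_mem hxs ht
        have hsub : Astar ⊆ A0 \ {w} := by
          intro t ht
          have htU := hsubU ht
          have htz : t ≠ z0 := fun h => hxsn (h ▸ ht)
          have htA : t ∈ A0 := by
            rcases htU.1 with h | h
            · exact h
            · exact absurd (Set.mem_singleton_iff.1 h) htz
          exact ⟨htA, htU.2⟩
        have hmem : Astar ∈ Fam1 := by
          refine ⟨w, ?_, ⟨xs, reaches_refl _ _ _⟩, ?_, comp_conn Adj⟩
          · intro hv
            exact ((hsub hv).2 rfl)
          · intro x hx y hxy
            by_cases hyw : y = w
            · right; exact hyw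
            · left
              have hxA : x ∈ A0 := (hsub hx).1
              have hyB : y ∈ B := hA0cl x hxA y hxy
              exact comp_closed hx (show y ∈ U from ⟨hyB, hyw⟩) (hsubU hx) hxy
        have h1 := hA0min Astar hmem
        have h2 : Astar.ncard ≤ (A0 \ {w}).ncard := Set.ncard_le_ncard hsub (Set.toFinite _)
        have h3 : (A0 \ {w}).ncard < A0.ncard := Set.ncard_diff_singleton_lt_of_mem hwA (Set.toFinite _)
        omega
    refine ⟨B, z0, hcB, ?_, ?_, ?_, ?_, hQ4, hQ5⟩
    · rw [hBd]; exact hA0ne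
    · intro v hv y hy
      rw [hBd] at hv
      rcases hA0cl v hv y hy with h | h
      · exact Or.inl h
      · exact Or.inr h
    · intro v hv
      rw [hBd] at hv
      exact hQ2 v hv
    · rw [hBd]; exact hA0conn

end Work

namespace Work

variable {V : Type} [Fintype V] [DecidableEq V]

/-- In the fragment setup, components of `B \ {p,q}` away from `A` avoid `A`
and have an edge to `q`. -/
lemma attach (Adj : V → V → Prop) (B A : Set V) (p q : V)
    (hQ4p : ConnOn Adj (B \ {p}))
    (hApq : ∀ x ∈ A, ∀ y, ua Adj x y → y ∈ A ∪ {p, q})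
    (hAB : A ⊆ B) (hpA : p ∉ A) (hAne : A.Nonempty)
    {w : V} (hwB : w ∈ B) (hwA : w ∉ A) (hwp : w ≠ p) (hwq : w ≠ q) :
    (∀ t, reaches Adj (B \ {p, q}) w t → t ∉ A) ∧
    (∃ t, reaches Adj (B \ {p, q}) w t ∧ ua Adj t q) := by
  classical
  have hstay : ∀ s t : V, s ∈ A → reaches Adj (B \ {p, q}) s t → t ∈ A := by
    intro s t hsA hr
    induction hr with
    | refl => exact hsA
    | tail _ hstep ih =>
      have hcl := hApq _ ih _ hstep.2.2
      rcases hcl with h | h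
      · exact h
      · exfalso
        have := hstep.2.1.2
        simp only [Set.mem_insert_iff, Set.mem_singleton_iff] at h this
        tauto
  have part1 : ∀ t, reaches Adj (B \ {p, q}) w t → t ∉ A := by
    intro t hr htA
    exact hwA (hstay t w htA (reaches_symm hr))
  refine ⟨part1, ?_⟩
  by_contra hno
  push_neg at hno
  have hwm : w ∈ (B \ {p, q} : Set V) := by
    simp only [Set.mem_diff, Set.mem_insert_iff, Set.mem_singleton_iff]
    exact ⟨hwB, by tauto⟩
  have hconv : ∀ s, reaches Adj (B \ {p}) w s → reaches Adj (B \ {p, q}) w s := by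
    intro s hs
    induction hs with
    | refl => exact reaches_refl _ _ _
    | @tail b s hwb hstep ih =>
      have hsq : s ≠ q := by
        intro h
        exact hno b ih (h ▸ hstep.2.2)
      have hbm : b ∈ (B \ {p, q} : Set V) := reaches_right_mem hwm ih
      have hsm : s ∈ (B \ {p, q} : Set V) := by
        simp only [Set.mem_diff, Set.mem_insert_iff, Set.mem_singleton_iff]
        refine ⟨hstep.2.1.1, ?_⟩
        have := hstep.2.1.2
        simp only [Set.mem_singleton_iff] at this
        tauto
      exact ih.tail ⟨hbm, hsm, hstep.2.2⟩
  obtain ⟨α, hαA⟩ := hAne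
  have hαm : α ∈ (B \ {p} : Set V) := by
    refine ⟨hAB hαA, ?_⟩
    simp only [Set.mem_singleton_iff]
    intro h; exact hpA (h ▸ hαA)
  have hwm' : w ∈ (B \ {p} : Set V) := by
    refine ⟨hwB, ?_⟩
    simp only [Set.mem_singleton_iff]; exact hwp
  have hr := hQ4p w hwm' α hαm
  exact part1 α (hconv α hr) hαA

end Work

namespace Work

variable {V : Type} [Fintype V] [DecidableEq V]

theorem endgameFalse (Adj : V → V → Prop) [Nonempty V]
    (hloop : ∀ v, ¬ Adj v v) (hdig : DigonFree Adj)
    (hconnU : ConnOn Adj Set.univ) (k : ℕ) (hk2 : 2 ≤ k)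
    (hreg : ∀ v : V, (NoutF Adj v).card = k ∧ (NinF Adj v).card = k)
    (L : V → Finset ℕ) (hLcard : ∀ v, (L v).card = k)
    (H1 : ∀ a u : V, ua Adj a u → ConnOn Adj {y | y ≠ u} → L u = L a)
    (H2 : ∀ a u1 u2 : V, ∀ γ : ℕ, u1 ≠ u2 →
      ((Adj a u1 ∧ Adj a u2) ∨ (Adj u1 a ∧ Adj u2 a)) →
      ConnOn Adj {y | y ≠ u1 ∧ y ≠ u2} → γ ∈ L u1 → γ ∈ L u2 → False) :
    False := by
  classical
  have huaout : ∀ a u : V, Adj a u → ua Adj a u := fun a u h =>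
    ⟨fun he => hloop a (he ▸ h), Or.inl h⟩
  have huain : ∀ a u : V, Adj u a → ua Adj a u := fun a u h =>
    ⟨fun he => hloop a (by rw [he] at h ⊢; exact h), Or.inr h⟩
  have hbig : ∃ x y : V, x ≠ y := by
    have v : V := Classical.arbitrary V
    have hc : 0 < (NoutF Adj v).card := by rw [(hreg v).1]; omega
    obtain ⟨u, hu⟩ := Finset.card_pos.1 hc
    exact ⟨v, u, fun h => hloop v (by rw [← h] at hu; exact mem_NoutF.1 hu)⟩
  obtain ⟨B, c, hcB, hBne, hQ1, hQ2, hQ3, hQ4, hQ5⟩ := getB Adj hconnU hbig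
  -- lists are equal on B \ {c}
  have hLeq : ∀ x ∈ B \ {c}, ∀ y ∈ B \ {c}, L x = L y := by
    have step : ∀ s t : V, rel Adj (B \ {c}) s t → L s = L t := by
      intro s t hrel
      exact (H1 s t hrel.2.2 (hQ2 t hrel.2.1)).symm
    intro x hx y hy
    have hreach := hQ3 x hx y hy
    clear hx hy
    induction hreach with
    | refl => rfl
    | tail _ hstep ih => exact ih.trans (step _ _ hstep)
  have hmemBd : ∀ x : V, x ∈ B → x ≠ c → x ∈ B \ {c} := by
    intro x h1 h2
    exact ⟨h1, by simp only [Set.mem_singleton_iff]; exact h2⟩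
  -- H2-killer
  have hkill : ∀ a x y : V, x ≠ y → x ∈ B → y ∈ B → x ≠ c → y ≠ c →
      ((Adj a x ∧ Adj a y) ∨ (Adj x a ∧ Adj y a)) →
      ConnOn Adj {s | s ≠ x ∧ s ≠ y} → False := by
    intro a x y hxy hxB hyB hxc hyc hsides hcon
    have hLxy : L x = L y := hLeq x (hmemBd x hxB hxc) y (hmemBd y hyB hyc)
    obtain ⟨γ, hγx⟩ : (L x).Nonempty := Finset.card_pos.1 (by rw [hLcard]; omega)
    exact H2 a x y γ hxy hsides hcon hγx (hLxy ▸ hγx)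
  -- c-free sides
  have hsideEx : ∀ a : V, ∃ T : Finset V, T.card = k ∧ c ∉ T ∧
      ((∀ x ∈ T, Adj a x) ∨ (∀ x ∈ T, Adj x a)) := by
    intro a
    by_cases hcout : c ∈ NoutF Adj a
    · refine ⟨NinF Adj a, (hreg a).2, ?_, Or.inr (fun x hx => mem_NinF.1 hx)⟩
      intro hcin
      exact hdig a c (mem_NoutF.1 hcout) (mem_NinF.1 hcin)
    · exact ⟨NoutF Adj a, (hreg a).1, hcout, Or.inl (fun x hx => mem_NoutF.1 hx)⟩
  -- the fragment family
  set Fam2 : Set (Set V) := {A | ∃ p q : V, p ≠ q ∧ p ∈ B ∧ q ∈ B ∧ p ≠ c ∧ q ≠ c ∧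
    A.Nonempty ∧ c ∉ A ∧ A ⊆ B ∧ p ∉ A ∧ q ∉ A ∧
    (∀ x ∈ A, ∀ y, ua Adj x y → y ∈ A ∪ {p, q}) ∧ ConnOn Adj A} with hFam2
  -- fragment maker
  have hmake : ∀ w1 w2 : V, w1 ≠ w2 → w1 ∈ B → w2 ∈ B → w1 ≠ c → w2 ≠ c →
      ¬ ConnOn Adj {s | s ≠ w1 ∧ s ≠ w2} →
      ∃ As ∈ Fam2, (∀ t ∈ As, ¬ reaches Adj {s | s ≠ w1 ∧ s ≠ w2} t c) ∧
        As ⊆ {s | s ≠ w1 ∧ s ≠ w2} := by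
    intro w1 w2 h12 h1B h2B h1c h2c hncon
    set U : Set V := {s | s ≠ w1 ∧ s ≠ w2} with hU
    have hcU : c ∈ U := ⟨Ne.symm h1c, Ne.symm h2c⟩
    obtain ⟨xs, hxsU, hxsn⟩ := nonreacher hcU hncon
    set As : Set V := {t | reaches Adj U xs t} with hAs
    have hsubU : As ⊆ U := by
      intro t ht
      by_cases hh : t = xs
      · rw [hh]; exact hxsU
      · exact reaches_right_mem hxsU ht
    have hnr : ∀ t ∈ As, ¬ reaches Adj U t c := by
      intro t ht hr
      exact hxsn (reaches_trans ht hr)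
    have hsubB : As ⊆ B := by
      intro t ht
      by_contra htB
      have h5 := hQ5 t htB
      have hmono : ((Set.univ \ B) ∪ {c} : Set V) ⊆ U := by
        intro s hs
        rcases hs with hs | hs
        · exact ⟨fun h => hs.2 (h ▸ h1B), fun h => hs.2 (h ▸ h2B)⟩
        · rw [Set.mem_singleton_iff.1 hs]; exact hcU
      exact hnr t ht (reaches_mono hmono h5)
    refine ⟨As, ⟨w1, w2, h12, h1B, h2B, h1c, h2c, ⟨xs, reaches_refl _ _ _⟩, ?_, hsubB,
      ?_, ?_, ?_, comp_conn Adj⟩, hnr, hsubU⟩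
    · intro hcA
      exact hnr c hcA (reaches_refl _ _ _)
    · intro h1A
      exact (hsubU h1A).1 rfl
    · intro h2A
      exact (hsubU h2A).2 rfl
    · intro x hx y hxy
      by_cases hyU : y ∈ U
      · exact Or.inl (comp_closed hx hyU (hsubU hx) hxy)
      · right
        simp only [hU, Set.mem_setOf_eq, not_and_or, not_not] at hyU
        simp only [Set.mem_insert_iff, Set.mem_singleton_iff]
        tauto
  -- Fam2 is nonempty (or we are already done)
  have hFam2ne : Fam2.Nonempty := by
    obtain ⟨a0, ha0⟩ := hBne
    have ha0B : a0 ∈ B := ha0.1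
    have ha0c : a0 ≠ c := by
      intro h; exact ha0.2 (by rw [h]; rfl)
    obtain ⟨T, hTcard, hTc, hTdir⟩ := hsideEx a0
    obtain ⟨u1, hu1T, u2, hu2T, h12⟩ := Finset.one_lt_card.1 (by omega : 1 < T.card)
    have huaT : ∀ x ∈ T, ua Adj a0 x := by
      intro x hx
      rcases hTdir with h | h
      · exact huaout _ _ (h x hx)
      · exact huain _ _ (h x hx)
    have hu1B : u1 ∈ B := hQ1 a0 ha0 u1 (huaT u1 hu1T)
    have hu2B : u2 ∈ B := hQ1 a0 ha0 u2 (huaT u2 hu2T)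
    have hu1c : u1 ≠ c := fun h => hTc (h ▸ hu1T)
    have hu2c : u2 ≠ c := fun h => hTc (h ▸ hu2T)
    by_cases hcon : ConnOn Adj {s | s ≠ u1 ∧ s ≠ u2}
    · exfalso
      have hsides : (Adj a0 u1 ∧ Adj a0 u2) ∨ (Adj u1 a0 ∧ Adj u2 a0) := by
        rcases hTdir with h | h
        · exact Or.inl ⟨h u1 hu1T, h u2 hu2T⟩
        · exact Or.inr ⟨h u1 hu1T, h u2 hu2T⟩
      exact hkill a0 u1 u2 h12 hu1B hu2B hu1c hu2c hsides hcon
    · obtain ⟨As, hAsF, _, _⟩ := hmake u1 u2 h12 hu1B hu2B hu1c hu2c hcon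
      exact ⟨As, hAsF⟩
  obtain ⟨A, hAF, hAmin⟩ := exists_min_ncard hFam2ne
  obtain ⟨p, q, hpq, hpB, hqB, hpc, hqc, hAne, hcA, hAB, hpA, hqA, hAcl, hAconn⟩ := hAF
  -- attachment in both directions
  have hatq : ∀ w : V, w ∈ B → w ∉ A → w ≠ p → w ≠ q →
      (∀ t, reaches Adj (B \ {p, q}) w t → t ∉ A) ∧
      (∃ t, reaches Adj (B \ {p, q}) w t ∧ ua Adj t q) :=
    fun w h1 h2 h3 h4 => attach Adj B A p q (hQ4 p hpB) hAcl hAB hpA hAne h1 h2 h3 h4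
  have hatp : ∀ w : V, w ∈ B → w ∉ A → w ≠ p → w ≠ q →
      (∃ t, reaches Adj (B \ {p, q}) w t ∧ ua Adj t p) := by
    intro w h1 h2 h3 h4
    have hAcl' : ∀ x ∈ A, ∀ y, ua Adj x y → y ∈ A ∪ {q, p} := by
      intro x hx y hxy
      have := hAcl x hx y hxy
      rwa [Set.pair_comm p q] at this
    have := (attach Adj B A q p (hQ4 q hqB) hAcl' hAB hqA hAne h1 h2 h4 h3).2
    rwa [Set.pair_comm q p] at this
  -- c is in B, outside A, p, q
  have hcpq : c ∈ B ∧ c ∉ A ∧ c ≠ p ∧ c ≠ q := ⟨hcB, hcA, Ne.symm hpc, Ne.symm hqc⟩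
  -- generic conversion of component paths
  have hconvG : ∀ (U' : Set V), (∀ s, s ∈ B → s ∉ A → s ≠ p → s ≠ q → s ∈ U') →
      ∀ w, w ∈ B → w ∉ A → w ≠ p → w ≠ q →
      ∀ t, reaches Adj (B \ {p, q}) w t → reaches Adj U' w t := by
    intro U' hU' w hwB hwA hwp hwq t hr
    have hnotA := (hatq w hwB hwA hwp hwq).1
    have hmem : ∀ s, reaches Adj (B \ {p, q}) w s → s ∈ U' := by
      intro s hs
      have hsm : s ∈ (B \ {p, q} : Set V) := by
        by_cases hh : s = w
        · subst hh
          simp only [Set.mem_diff, Set.mem_insert_iff, Set.mem_singleton_iff]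
          exact ⟨hwB, by tauto⟩
        · refine reaches_right_mem ?_ hs
          simp only [Set.mem_diff, Set.mem_insert_iff, Set.mem_singleton_iff]
          exact ⟨hwB, by tauto⟩
      simp only [Set.mem_diff, Set.mem_insert_iff, Set.mem_singleton_iff] at hsm
      exact hU' s hsm.1 (hnotA s hs) (fun h => hsm.2 (Or.inl h)) (fun h => hsm.2 (Or.inr h))
    induction hr with
    | refl => exact reaches_refl _ _ _
    | @tail b s hwb hstep ih =>
      exact ih.tail ⟨hmem b hwb, hmem s (hwb.tail hstep), hstep.2.2⟩
  -- everyone outside A reaches c after deleting a pair from A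
  have hreachc : ∀ x y : V, x ∈ A → y ∈ A →
      ∀ w : V, w ≠ x → w ≠ y → w ∉ A → reaches Adj {s | s ≠ x ∧ s ≠ y} w c := by
    intro x y hxA hyA
    set U2 : Set V := {s | s ≠ x ∧ s ≠ y} with hU2
    have hU2good : ∀ s, s ∈ B → s ∉ A → s ≠ p → s ≠ q → s ∈ U2 := by
      intro s _ hsA _ _
      exact ⟨fun h => hsA (h ▸ hxA), fun h => hsA (h ▸ hyA)⟩
    have hcU2 : c ∈ U2 := hU2good c hcB hcA (Ne.symm hpc) (Ne.symm hqc)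
    have hpU2 : p ∈ U2 := ⟨fun h => hpA (h ▸ hxA), fun h => hpA (h ▸ hyA)⟩
    have hqU2 : q ∈ U2 := ⟨fun h => hqA (h ▸ hxA), fun h => hqA (h ▸ hyA)⟩
    -- q reaches c, p reaches c
    have hqc2 : reaches Adj U2 q c := by
      obtain ⟨t, htr, htq⟩ := (hatq c hcB hcA (Ne.symm hpc) (Ne.symm hqc)).2
      have h1 : reaches Adj U2 c t :=
        hconvG U2 hU2good c hcB hcA (Ne.symm hpc) (Ne.symm hqc) t htr
      have htU2 : t ∈ U2 := by
        by_cases hh : t = c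
        · rw [hh]; exact hcU2
        · exact reaches_right_mem hcU2 h1
      exact reaches_symm (h1.tail ⟨htU2, hqU2, htq⟩)
    have hpc2 : reaches Adj U2 p c := by
      obtain ⟨t, htr, htp⟩ := hatp c hcB hcA (Ne.symm hpc) (Ne.symm hqc)
      have h1 : reaches Adj U2 c t :=
        hconvG U2 hU2good c hcB hcA (Ne.symm hpc) (Ne.symm hqc) t htr
      have htU2 : t ∈ U2 := by
        by_cases hh : t = c
        · rw [hh]; exact hcU2
        · exact reaches_right_mem hcU2 h1
      exact reaches_symm (h1.tail ⟨htU2, hpU2, htp⟩)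
    intro w hwx hwy hwA
    by_cases hwB : w ∈ B
    · by_cases hwp : w = p
      · rw [hwp]; exact hpc2
      · by_cases hwq : w = q
        · rw [hwq]; exact hqc2
        · obtain ⟨t, htr, htq⟩ := (hatq w hwB hwA hwp hwq).2
          have h1 : reaches Adj U2 w t := hconvG U2 hU2good w hwB hwA hwp hwq t htr
          have htU2 : t ∈ U2 := by
            by_cases hh : t = w
            · rw [hh]; exact ⟨hwx, hwy⟩
            · exact reaches_right_mem ⟨hwx, hwy⟩ h1
          exact reaches_trans (h1.tail ⟨htU2, hqU2, htq⟩) hqc2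
    · have h5 := hQ5 w hwB
      have hmono : ((Set.univ \ B) ∪ {c} : Set V) ⊆ U2 := by
        intro s hs
        rcases hs with hs | hs
        · exact ⟨fun h => hs.2 (h ▸ hAB hxA), fun h => hs.2 (h ▸ hAB hyA)⟩
        · rw [Set.mem_singleton_iff.1 hs]; exact hcU2
      exact reaches_mono hmono h5
  -- shrinking contradiction
  have hshrink : ∀ x y : V, x ∈ A → y ∈ A → x ≠ y →
      ¬ ConnOn Adj {s | s ≠ x ∧ s ≠ y} → False := by
    intro x y hxA hyA hxy hncon
    have hxB : x ∈ B := hAB hxA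
    have hyB : y ∈ B := hAB hyA
    have hxc : x ≠ c := fun h => hcA (h ▸ hxA)
    have hyc : y ≠ c := fun h => hcA (h ▸ hyA)
    obtain ⟨As, hAsF, hnr, hsubU⟩ := hmake x y hxy hxB hyB hxc hyc hncon
    have hsub : As ⊆ A \ {x} := by
      intro t ht
      have htU := hsubU ht
      have htA : t ∈ A := by
        by_contra htA
        exact hnr t ht (hreachc x y hxA hyA t htU.1 htU.2 htA)
      exact ⟨htA, by simp only [Set.mem_singleton_iff]; exact htU.1⟩
    have h1 := hAmin As hAsF
    have h2 : As.ncard ≤ (A \ {x}).ncard := Set.ncard_le_ncard hsub (Set.toFinite _)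
    have h3 : (A \ {x}).ncard < A.ncard := Set.ncard_diff_singleton_lt_of_mem hxA (Set.toFinite _)
    omega
  -- main case analysis
  by_cases hcaseA : ∃ a ∈ A, ∃ x y : V, x ≠ y ∧ x ∈ A ∧ y ∈ A ∧
      ((Adj a x ∧ Adj a y) ∨ (Adj x a ∧ Adj y a))
  · obtain ⟨a, haA, x, y, hxy, hxA, hyA, hsides⟩ := hcaseA
    by_cases hcon : ConnOn Adj {s | s ≠ x ∧ s ≠ y}
    · exact hkill a x y hxy (hAB hxA) (hAB hyA) (fun h => hcA (h ▸ hxA))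
        (fun h => hcA (h ▸ hyA)) hsides hcon
    · exact hshrink x y hxA hyA hxy hcon
  · push_neg at hcaseA
    -- bound on side-intersections with A
    have hsideA : ∀ a ∈ A, ∀ T : Finset V, ((∀ x ∈ T, Adj a x) ∨ (∀ x ∈ T, Adj x a)) →
        (T ∩ A.toFinset).card ≤ 1 := by
      intro a haA T hdir
      by_contra h
      push_neg at h
      obtain ⟨x, hx, y, hy, hxy⟩ := Finset.one_lt_card.1 h
      have hxT := (Finset.mem_inter.1 hx).1
      have hyT := (Finset.mem_inter.1 hy).1
      have hxA := Set.mem_toFinset.1 (Finset.mem_inter.1 hx).2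
      have hyA := Set.mem_toFinset.1 (Finset.mem_inter.1 hy).2
      have hno := hcaseA a haA x y hxy hxA hyA
      rcases hdir with h' | h'
      · exact hno.1 (h' x hxT) (h' y hyT)
      · exact hno.2 (h' x hxT) (h' y hyT)
    set pqF : Finset V := {p, q} with hpqF
    have hmempq : ∀ r : V, r ∈ pqF ↔ r = p ∨ r = q := by
      intro r; simp [hpqF]
    have hpqcard : pqF.card = 2 := Finset.card_pair hpq
    have hsidesub : ∀ a ∈ A, ∀ T : Finset V, ((∀ x ∈ T, Adj a x) ∨ (∀ x ∈ T, Adj x a)) →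
        T ⊆ A.toFinset ∪ pqF := by
      intro a haA T hdir t ht
      have huat : ua Adj a t := by
        rcases hdir with h' | h'
        · exact huaout _ _ (h' t ht)
        · exact huain _ _ (h' t ht)
      have hcl := hAcl a haA t huat
      rcases hcl with h' | h'
      · exact Finset.mem_union_left _ (Set.mem_toFinset.2 h')
      · apply Finset.mem_union_right
        rw [hmempq]
        simpa using h'
    have hsplit : ∀ T : Finset V, T ⊆ A.toFinset ∪ pqF →
        T.card ≤ (T ∩ A.toFinset).card + (T ∩ pqF).card := by
      intro T hT
      have hsub : T ⊆ (T ∩ A.toFinset) ∪ (T ∩ pqF) := by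
        intro t ht
        rcases Finset.mem_union.1 (hT ht) with h' | h'
        · exact Finset.mem_union_left _ (Finset.mem_inter.2 ⟨ht, h'⟩)
        · exact Finset.mem_union_right _ (Finset.mem_inter.2 ⟨ht, h'⟩)
      exact le_trans (Finset.card_le_card hsub) (Finset.card_union_le _ _)
    have hdisjoi : ∀ a t : V, t ∈ NoutF Adj a → t ∈ NinF Adj a → False :=
      fun a t h1 h2 => hdig a t (mem_NoutF.1 h1) (mem_NinF.1 h2)
    have houtpq : ∀ a ∈ A, k - 1 ≤ (NoutF Adj a ∩ pqF).card ∧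
        k - 1 ≤ (NinF Adj a ∩ pqF).card := by
      intro a haA
      have h1 := hsplit (NoutF Adj a)
        (hsidesub a haA _ (Or.inl fun x hx => mem_NoutF.1 hx))
      have h2 := hsplit (NinF Adj a)
        (hsidesub a haA _ (Or.inr fun x hx => mem_NinF.1 hx))
      have h3 := hsideA a haA (NoutF Adj a) (Or.inl fun x hx => mem_NoutF.1 hx)
      have h4 := hsideA a haA (NinF Adj a) (Or.inr fun x hx => mem_NinF.1 hx)
      have h5 := (hreg a).1
      have h6 := (hreg a).2
      omega
    have hsum : ∀ a : V, (NoutF Adj a ∩ pqF).card + (NinF Adj a ∩ pqF).card ≤ 2 := by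
      intro a
      have hdisj2 : Disjoint (NoutF Adj a ∩ pqF) (NinF Adj a ∩ pqF) := by
        rw [Finset.disjoint_left]
        intro t h1 h2
        exact hdisjoi a t (Finset.mem_inter.1 h1).1 (Finset.mem_inter.1 h2).1
      have hunion : (NoutF Adj a ∩ pqF) ∪ (NinF Adj a ∩ pqF) ⊆ pqF := by
        intro t ht
        rcases Finset.mem_union.1 ht with h' | h'
        · exact (Finset.mem_inter.1 h').2
        · exact (Finset.mem_inter.1 h').2
      have := Finset.card_le_card hunion
      rw [Finset.card_union_of_disjoint hdisj2] at this
      omega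
    have hk2' : k = 2 := by
      obtain ⟨a1, ha1A⟩ := hAne
      have h1 := houtpq a1 ha1A
      have h2 := hsum a1
      omega
    have hadjpq : ∀ a ∈ A, ua Adj a p ∧ ua Adj a q := by
      intro a haA
      have h1 := houtpq a haA
      obtain ⟨wo, hwo⟩ : ∃ wo, wo ∈ NoutF Adj a ∩ pqF :=
        Finset.card_pos.1 (by omega)
      obtain ⟨wi, hwi⟩ : ∃ wi, wi ∈ NinF Adj a ∩ pqF :=
        Finset.card_pos.1 (by omega)
      have hwoO := (Finset.mem_inter.1 hwo).1
      have hwiI := (Finset.mem_inter.1 hwi).1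
      have hwopq := (hmempq wo).1 (Finset.mem_inter.1 hwo).2
      have hwipq := (hmempq wi).1 (Finset.mem_inter.1 hwi).2
      have hwowi : wo ≠ wi := by
        intro h
        exact hdisjoi a wo hwoO (h ▸ hwiI)
      have hua_wo : ua Adj a wo := huaout _ _ (mem_NoutF.1 hwoO)
      have hua_wi : ua Adj a wi := huain _ _ (mem_NinF.1 hwiI)
      constructor
      · rcases hwopq with h | h
        · exact h ▸ hua_wo
        · rcases hwipq with h' | h'
          · exact h' ▸ hua_wi
          · exfalso; exact hwowi (h.trans h'.symm)
      · rcases hwopq with h | h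
        · rcases hwipq with h' | h'
          · exfalso; exact hwowi (h.trans h'.symm)
          · exact h' ▸ hua_wi
        · exact h ▸ hua_wo
    -- apex vertex
    obtain ⟨a1, ha1A⟩ := hAne
    have ha1B : a1 ∈ B := hAB ha1A
    have ha1c : a1 ≠ c := fun h => hcA (h ▸ ha1A)
    obtain ⟨T, hTcard, hTc, hTdir⟩ := hsideEx a1
    have hTsub : T ⊆ A.toFinset ∪ pqF := hsidesub a1 ha1A T hTdir
    have hTA : (T ∩ A.toFinset).card ≤ 1 := hsideA a1 ha1A T hTdir
    have hTpq1 : (T ∩ pqF).card ≤ 1 := by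
      by_contra hcon2
      push_neg at hcon2
      have heq : T ∩ pqF = pqF :=
        Finset.eq_of_subset_of_card_le Finset.inter_subset_right (by omega)
      have hpT : p ∈ T := by
        have : p ∈ T ∩ pqF := heq.symm ▸ ((hmempq p).2 (Or.inl rfl))
        exact (Finset.mem_inter.1 this).1
      have hqT : q ∈ T := by
        have : q ∈ T ∩ pqF := heq.symm ▸ ((hmempq q).2 (Or.inr rfl))
        exact (Finset.mem_inter.1 this).1
      rcases hTdir with hdirT | hdirT
      · -- out-side contains p,q; then the in-side is inside A
        have hinpq : NinF Adj a1 ∩ pqF = ∅ := by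
          rw [Finset.eq_empty_iff_forall_notMem]
          intro t ht
          have htI := (Finset.mem_inter.1 ht).1
          have htpq := (hmempq t).1 (Finset.mem_inter.1 ht).2
          have htT : t ∈ T := by
            rcases htpq with h | h
            · exact h ▸ hpT
            · exact h ▸ hqT
          exact hdisjoi a1 t (mem_NoutF.2 (hdirT t htT)) htI
        have h2' := hsplit (NinF Adj a1)
          (hsidesub a1 ha1A _ (Or.inr fun x hx => mem_NinF.1 hx))
        have h4' := hsideA a1 ha1A (NinF Adj a1) (Or.inr fun x hx => mem_NinF.1 hx)
        rw [hinpq] at h2'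
        have h6' := (hreg a1).2
        simp at h2'
        omega
      · have hinpq : NoutF Adj a1 ∩ pqF = ∅ := by
          rw [Finset.eq_empty_iff_forall_notMem]
          intro t ht
          have htI := (Finset.mem_inter.1 ht).1
          have htpq := (hmempq t).1 (Finset.mem_inter.1 ht).2
          have htT : t ∈ T := by
            rcases htpq with h | h
            · exact h ▸ hpT
            · exact h ▸ hqT
          exact hdisjoi a1 t htI (mem_NinF.2 (hdirT t htT))
        have h2' := hsplit (NoutF Adj a1)
          (hsidesub a1 ha1A _ (Or.inl fun x hx => mem_NoutF.1 hx))
        have h4' := hsideA a1 ha1A (NoutF Adj a1) (Or.inl fun x hx => mem_NoutF.1 hx)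
        rw [hinpq] at h2'
        have h6' := (hreg a1).1
        simp at h2'
        omega
    have hTk : T.card = 2 := by rw [hTcard, hk2']
    have hTsplit := hsplit T hTsub
    obtain ⟨u, hu⟩ : ∃ u, u ∈ T ∩ pqF := Finset.card_pos.1 (by omega)
    obtain ⟨α, hα⟩ : ∃ α, α ∈ T ∩ A.toFinset := Finset.card_pos.1 (by omega)
    have huT := (Finset.mem_inter.1 hu).1
    have hupq := (hmempq u).1 (Finset.mem_inter.1 hu).2
    have hαT := (Finset.mem_inter.1 hα).1
    have hαA' : α ∈ A := Set.mem_toFinset.1 (Finset.mem_inter.1 hα).2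
    have huB : u ∈ B := by
      rcases hupq with h | h
      · exact h ▸ hpB
      · exact h ▸ hqB
    have huA : u ∉ A := by
      rcases hupq with h | h
      · exact h ▸ hpA
      · exact h ▸ hqA
    have hαu : α ≠ u := fun h => huA (h ▸ hαA')
    have huc : u ≠ c := fun h => hTc (h ▸ huT)
    have hαc : α ≠ c := fun h => hcA (h ▸ hαA')
    obtain ⟨u', hu'or, hu'ne, hcase⟩ : ∃ u', (u' = p ∨ u' = q) ∧ u' ≠ u ∧
        ((u = p ∧ u' = q) ∨ (u = q ∧ u' = p)) := by
      rcases hupq with h | h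
      · exact ⟨q, Or.inr rfl, by rw [h]; exact Ne.symm hpq, Or.inl ⟨h, rfl⟩⟩
      · exact ⟨p, Or.inl rfl, by rw [h]; exact hpq, Or.inr ⟨h, rfl⟩⟩
    have hu'B : u' ∈ B := by
      rcases hu'or with h | h
      · exact h ▸ hpB
      · exact h ▸ hqB
    have hu'A : u' ∉ A := by
      rcases hu'or with h | h
      · exact h ▸ hpA
      · exact h ▸ hqA
    have hAu' : ∀ t ∈ A, ua Adj t u' := by
      intro t ht
      rcases hu'or with h | h
      · exact h ▸ (hadjpq t ht).1
      · exact h ▸ (hadjpq t ht).2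
    set U3 : Set V := {s | s ≠ α ∧ s ≠ u} with hU3
    have hU3good : ∀ s, s ∈ B → s ∉ A → s ≠ p → s ≠ q → s ∈ U3 := by
      intro s _ hsA hsp hsq
      refine ⟨fun h => hsA (h ▸ hαA'), ?_⟩
      rcases hupq with h | h
      · rw [h]; exact hsp
      · rw [h]; exact hsq
    have hcU3 : c ∈ U3 := hU3good c hcB hcA (Ne.symm hpc) (Ne.symm hqc)
    have hu'U3 : u' ∈ U3 := ⟨fun h => hu'A (h ▸ hαA'), hu'ne⟩
    have hu'c3 : reaches Adj U3 u' c := by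
      rcases hu'or with h | h
      · obtain ⟨t, htr, htp⟩ := hatp c hcB hcA (Ne.symm hpc) (Ne.symm hqc)
        have h1 : reaches Adj U3 c t :=
          hconvG U3 hU3good c hcB hcA (Ne.symm hpc) (Ne.symm hqc) t htr
        have htU3 : t ∈ U3 := by
          by_cases hh : t = c
          · rw [hh]; exact hcU3
          · exact reaches_right_mem hcU3 h1
        exact reaches_symm (h1.tail ⟨htU3, hu'U3, by rw [h]; exact htp⟩)
      · obtain ⟨t, htr, htq⟩ := (hatq c hcB hcA (Ne.symm hpc) (Ne.symm hqc)).2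
        have h1 : reaches Adj U3 c t :=
          hconvG U3 hU3good c hcB hcA (Ne.symm hpc) (Ne.symm hqc) t htr
        have htU3 : t ∈ U3 := by
          by_cases hh : t = c
          · rw [hh]; exact hcU3
          · exact reaches_right_mem hcU3 h1
        exact reaches_symm (h1.tail ⟨htU3, hu'U3, by rw [h]; exact htq⟩)
    have hall3 : ∀ t ∈ U3, reaches Adj U3 t c := by
      intro t htU3
      by_cases htA : t ∈ A
      · exact reaches_trans
          (Relation.ReflTransGen.single ⟨htU3, hu'U3, hAu' t htA⟩) hu'c3
      · by_cases htB : t ∈ B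
        · by_cases htp : t = p
          · rcases hcase with ⟨h1', h2'⟩ | ⟨h1', h2'⟩
            · exact absurd (htp.trans h1'.symm) htU3.2
            · rw [htp, ← h2']; exact hu'c3
          · by_cases htq : t = q
            · rcases hcase with ⟨h1', h2'⟩ | ⟨h1', h2'⟩
              · rw [htq, ← h2']; exact hu'c3
              · exact absurd (htq.trans h1'.symm) htU3.2
            · rcases hu'or with h | h
              · obtain ⟨s, hsr, hsp⟩ := hatp t htB htA htp htq
                have h1 : reaches Adj U3 t s :=
                  hconvG U3 hU3good t htB htA htp htq s hsr
                have hsU3 : s ∈ U3 := by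
                  by_cases hh : s = t
                  · rw [hh]; exact htU3
                  · exact reaches_right_mem htU3 h1
                exact reaches_trans (h1.tail ⟨hsU3, hu'U3, by rw [h]; exact hsp⟩) hu'c3
              · obtain ⟨s, hsr, hsq⟩ := (hatq t htB htA htp htq).2
                have h1 : reaches Adj U3 t s :=
                  hconvG U3 hU3good t htB htA htp htq s hsr
                have hsU3 : s ∈ U3 := by
                  by_cases hh : s = t
                  · rw [hh]; exact htU3
                  · exact reaches_right_mem htU3 h1
                exact reaches_trans (h1.tail ⟨hsU3, hu'U3, by rw [h]; exact hsq⟩) hu'c3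
        · have h5 := hQ5 t htB
          have hmono : ((Set.univ \ B) ∪ {c} : Set V) ⊆ U3 := by
            intro s hs
            rcases hs with hs | hs
            · exact ⟨fun h => hs.2 (h ▸ hAB hαA'), fun h => hs.2 (h ▸ huB)⟩
            · rw [Set.mem_singleton_iff.1 hs]; exact hcU3
          exact reaches_mono hmono h5
    have hcon3 : ConnOn Adj U3 := connOn_of_reach_c hall3
    have hsides3 : (Adj a1 α ∧ Adj a1 u) ∨ (Adj α a1 ∧ Adj u a1) := by
      rcases hTdir with h' | h'
      · exact Or.inl ⟨h' α hαT, h' u huT⟩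
      · exact Or.inr ⟨h' α hαT, h' u huT⟩
    exact hkill a1 α u hαu (hAB hαA') huB hαc huc hsides3 hcon3

end Work

namespace Work

variable {V : Type} [Fintype V] [DecidableEq V]

lemma outDeg_eq (Adj : V → V → Prop) (v : V) : outDeg Adj v = (NoutF Adj v).card := by
  classical
  rw [outDeg, Nat.card_eq_fintype_card, Fintype.card_subtype, NoutF]

lemma inDeg_eq (Adj : V → V → Prop) (v : V) : inDeg Adj v = (NinF Adj v).card := by
  classical
  rw [inDeg, Nat.card_eq_fintype_card, Fintype.card_subtype, NinF]

lemma connOn_univ (Adj : V → V → Prop) (hconn : (underGraph Adj).Connected) :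
    ConnOn Adj Set.univ := by
  suffices h : ∀ x y : V, (underGraph Adj).Reachable x y → reaches Adj Set.univ x y by
    intro x _ y _
    exact h x y (hconn.preconnected x y)
  intro x y hr
  obtain ⟨w⟩ := hr
  induction w with
  | nil => exact reaches_refl _ _ _
  | cons h _ ih =>
    exact Relation.ReflTransGen.head ⟨Set.mem_univ _, Set.mem_univ _, (show _ ≠ _ ∧ (Adj _ _ ∨ Adj _ _) from h).1, (show _ ≠ _ ∧ (Adj _ _ ∨ Adj _ _) from h).2⟩ ih

lemma k_ge_two (Adj : V → V → Prop) (hΔ : 1 < tildeDelta Adj) : 2 ≤ ⌈tildeDelta Adj⌉₊ :=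
  Nat.lt_ceil.2 (by exact_mod_cast hΔ)

lemma prod_le_ksq (Adj : V → V → Prop) [Nonempty V] :
    ∀ v : V, (NoutF Adj v).card * (NinF Adj v).card ≤
      ⌈tildeDelta Adj⌉₊ * ⌈tildeDelta Adj⌉₊ := by
  intro v
  have h1 : Real.sqrt ((outDeg Adj v : ℝ) * (inDeg Adj v : ℝ)) ≤ tildeDelta Adj := by
    apply le_ciSup (f := fun v => Real.sqrt ((outDeg Adj v : ℝ) * (inDeg Adj v : ℝ)))
    exact (Set.finite_range _).bddAbove
  have h2 : tildeDelta Adj ≤ (⌈tildeDelta Adj⌉₊ : ℝ) := Nat.le_ceil _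
  have h3 : Real.sqrt ((outDeg Adj v : ℝ) * (inDeg Adj v : ℝ)) ≤ (⌈tildeDelta Adj⌉₊ : ℝ) :=
    h1.trans h2
  have h4 : ((outDeg Adj v : ℝ) * (inDeg Adj v : ℝ)) ≤ (⌈tildeDelta Adj⌉₊ : ℝ) ^ 2 :=
    (Real.sqrt_le_left (by positivity)).1 h3
  have h5 : ((outDeg Adj v * inDeg Adj v : ℕ) : ℝ) ≤ ((⌈tildeDelta Adj⌉₊ * ⌈tildeDelta Adj⌉₊ : ℕ) : ℝ) := by
    push_cast
    rw [sq] at h4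
    exact_mod_cast h4
  have h6 := Nat.cast_le.1 h5
  rwa [outDeg_eq, inDeg_eq] at h6

lemma reach_closed {Adj : V → V → Prop} {S : Set V} {U : Set V}
    (hcl : ∀ x ∈ S, ∀ y, ua Adj x y → y ∈ S) {x y : V}
    (hx : x ∈ S) (h : reaches Adj U x y) : y ∈ S := by
  induction h with
  | refl => exact hx
  | tail _ hr ih => exact hcl _ ih _ hr.2.2

lemma dichot (Adj : V → V → Prop) (k : ℕ) (hk0 : 0 < k) (hconnU : ConnOn Adj Set.univ)
    (hprod : ∀ v : V, (NoutF Adj v).card * (NinF Adj v).card ≤ k * k) :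
    ∀ S : Finset V, S.Nonempty →
      (∃ v ∈ S, ((NoutF Adj v) ∩ S).card < k ∨ ((NinF Adj v) ∩ S).card < k)
      ∨ (∀ v : V, (NoutF Adj v).card = k ∧ (NinF Adj v).card = k) := by
  intro S hS
  by_cases hdef : ∃ v ∈ S, ((NoutF Adj v) ∩ S).card < k ∨ ((NinF Adj v) ∩ S).card < k
  · exact Or.inl hdef
  · right
    push_neg at hdef
    have hkey : ∀ v ∈ S, (NoutF Adj v).card = k ∧ (NinF Adj v).card = k ∧
        NoutF Adj v ⊆ S ∧ NinF Adj v ⊆ S := by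
      intro v hv
      obtain ⟨ho, hi⟩ := hdef v hv
      have ho2 : ((NoutF Adj v) ∩ S).card ≤ (NoutF Adj v).card :=
        Finset.card_le_card (Finset.inter_subset_left)
      have hi2 : ((NinF Adj v) ∩ S).card ≤ (NinF Adj v).card :=
        Finset.card_le_card (Finset.inter_subset_left)
      have hp := hprod v
      have hka : k ≤ (NoutF Adj v).card := le_trans ho ho2
      have hkb : k ≤ (NinF Adj v).card := le_trans hi hi2
      have hak : (NoutF Adj v).card * k ≤ k * k :=
        le_trans (Nat.mul_le_mul le_rfl hkb) hp
      have hbk : k * (NinF Adj v).card ≤ k * k :=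
        le_trans (Nat.mul_le_mul hka le_rfl) hp
      have ha : (NoutF Adj v).card ≤ k := Nat.le_of_mul_le_mul_right hak hk0
      have hb : (NinF Adj v).card ≤ k := Nat.le_of_mul_le_mul_left hbk hk0
      have hcards : (NoutF Adj v).card = k ∧ (NinF Adj v).card = k :=
        ⟨le_antisymm ha hka, le_antisymm hb hkb⟩
      have hoeq : (NoutF Adj v) ∩ S = NoutF Adj v :=
        Finset.eq_of_subset_of_card_le Finset.inter_subset_left (by omega)
      have hieq : (NinF Adj v) ∩ S = NinF Adj v :=
        Finset.eq_of_subset_of_card_le Finset.inter_subset_left (by omega)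
      refine ⟨hcards.1, hcards.2, ?_, ?_⟩
      · rw [← hoeq]; exact Finset.inter_subset_right
      · rw [← hieq]; exact Finset.inter_subset_right
    have hclosed : ∀ x ∈ (↑S : Set V), ∀ y, ua Adj x y → y ∈ (↑S : Set V) := by
      intro x hx y hxy
      obtain ⟨_, _, hox, hix⟩ := hkey x (Finset.mem_coe.1 hx)
      rcases hxy.2 with h | h
      · exact Finset.mem_coe.2 (hox (mem_NoutF.2 h))
      · exact Finset.mem_coe.2 (hix (mem_NinF.2 h))
    obtain ⟨s0, hs0⟩ := hS
    have hSuniv : ∀ v : V, v ∈ S := by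
      intro v
      have := reach_closed hclosed (Finset.mem_coe.2 hs0)
        (hconnU s0 (Set.mem_univ _) v (Set.mem_univ _))
      exact Finset.mem_coe.1 this
    intro v
    obtain ⟨h1, h2, _, _⟩ := hkey v (hSuniv v)
    exact ⟨h1, h2⟩

/-- The heavy endgame: regular case contradiction/coloring. -/
theorem endgame (Adj : V → V → Prop) [Nonempty V]
    (hloop : ∀ v, ¬ Adj v v) (hdig : DigonFree Adj)
    (hconnU : ConnOn Adj Set.univ) (k : ℕ) (hk2 : 2 ≤ k)
    (hreg : ∀ v : V, (NoutF Adj v).card = k ∧ (NinF Adj v).card = k)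
    (L : V → Finset ℕ) (hLcard : ∀ v, (L v).card = k) :
    LColorable Adj L := by
  classical
  by_cases hW1 : ∃ a u γ, ua Adj a u ∧ ConnOn Adj {y | y ≠ u} ∧ γ ∈ L u ∧ γ ∉ L a
  · obtain ⟨a, u, γ, huav, hcon, hγu, hγa⟩ := hW1
    have hau : a ≠ u := huav.1
    have hconn' : ∀ x : V, x ≠ u → reaches Adj {y | y ≠ u} x a :=
      fun x hx => hcon x hx a hau
    rcases huav.2 with hadj | hadj
    · exact scenW1out Adj hloop hdig k L hLcard hreg a u γ hadj hγu hγa hconn'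
    · apply LColorable_flip
      refine scenW1out (fun x y => Adj y x) hloop (fun x y h h' => hdig y x h h') k L hLcard
        (fun v => by rw [NoutF_flip, NinF_flip]; exact ⟨(hreg v).2, (hreg v).1⟩)
        a u γ hadj hγu hγa (fun x hx => reaches_flip (hconn' x hx))
  · by_cases hW2 : ∃ a u1 u2 γ, u1 ≠ u2 ∧
        ((Adj a u1 ∧ Adj a u2) ∨ (Adj u1 a ∧ Adj u2 a)) ∧
        ConnOn Adj {y | y ≠ u1 ∧ y ≠ u2} ∧ γ ∈ L u1 ∧ γ ∈ L u2
    · obtain ⟨a, u1, u2, γ, hne12, hsides, hcon, hγ1, hγ2⟩ := hW2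
      have hau1 : a ≠ u1 := by
        rcases hsides with ⟨h, _⟩ | ⟨h, _⟩ <;>
          exact fun he => hloop u1 (by rw [he] at h; exact h)
      have hau2 : a ≠ u2 := by
        rcases hsides with ⟨_, h⟩ | ⟨_, h⟩ <;>
          exact fun he => hloop u2 (by rw [he] at h; exact h)
      have hconn' : ∀ x : V, x ≠ u1 → x ≠ u2 → reaches Adj {y | y ≠ u1 ∧ y ≠ u2} x a :=
        fun x h1 h2 => hcon x ⟨h1, h2⟩ a ⟨hau1, hau2⟩
      rcases hsides with ⟨h1, h2⟩ | ⟨h1, h2⟩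
      · exact scenW2out Adj hloop hdig k L hLcard hreg a u1 u2 γ hne12 h1 h2 hγ1 hγ2 hconn'
      · apply LColorable_flip
        exact scenW2out (fun x y => Adj y x) hloop (fun x y h h' => hdig y x h h') k L hLcard
          (fun v => by rw [NoutF_flip, NinF_flip]; exact ⟨(hreg v).2, (hreg v).1⟩)
          a u1 u2 γ hne12 h1 h2 hγ1 hγ2 (fun x hx1 hx2 => reaches_flip (hconn' x hx1 hx2))
    · exfalso
      apply endgameFalse Adj hloop hdig hconnU k hk2 hreg L hLcard
      · intro a u huau hcon
        apply Finset.eq_of_subset_of_card_le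
        · intro γ hγ
          by_contra hno
          exact hW1 ⟨a, u, γ, huau, hcon, hγ, hno⟩
        · rw [hLcard, hLcard]
      · intro a u1 u2 γ hne12 hsides hcon hγ1 hγ2
        exact hW2 ⟨a, u1, u2, γ, hne12, hsides, hcon, hγ1, hγ2⟩

theorem mainColor (Adj : V → V → Prop) [Nonempty V]
    (hloop : ∀ v, ¬ Adj v v) (hdig : DigonFree Adj)
    (hconnU : ConnOn Adj Set.univ) (k : ℕ) (hk2 : 2 ≤ k)
    (hprod : ∀ v : V, (NoutF Adj v).card * (NinF Adj v).card ≤ k * k)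
    (L : V → Finset ℕ) (hLcard : ∀ v, (L v).card = k) :
    LColorable Adj L := by
  by_cases hreg : ∀ v : V, (NoutF Adj v).card = k ∧ (NinF Adj v).card = k
  · exact endgame Adj hloop hdig hconnU k hk2 hreg L hLcard
  · apply scenA Adj hloop hdig k L (fun v => le_of_eq (hLcard v).symm)
    intro S hS
    rcases dichot Adj k (by omega) hconnU hprod S hS with h | h
    · exact h
    · exact absurd h hreg

end Work


/-- **Lemma 5.** Let `D` be a connected digraph without digons with `Δ̃ = Δ̃(D)`.
If `Δ̃ > 1`, then `χ_l(D) ≤ ⌈Δ̃⌉`. -/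
theorem stmt_7 {V : Type} [Fintype V] (Adj : V → V → Prop)
    (hloopless : ∀ v, ¬ Adj v v)
    (hconn : (underGraph Adj).Connected)
    (hdigon : DigonFree Adj)
    (hΔ : 1 < tildeDelta Adj) :
    listChromNum Adj ≤ ⌈tildeDelta Adj⌉₊ := by
  classical
  haveI : Nonempty V := hconn.nonempty
  set k := ⌈tildeDelta Adj⌉₊ with hk
  have hk2 : 2 ≤ k := Work.k_ge_two Adj hΔ
  have hprod := Work.prod_le_ksq Adj (V := V)
  have hconnU := Work.connOn_univ Adj hconn
  have hch : Choosable Adj k := by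
    intro L hLk
    have hex := fun v => Finset.exists_subset_card_eq (hLk v)
    choose L' hsub hcards using hex
    obtain ⟨c, hc1, hc2⟩ :=
      Work.mainColor Adj hloopless hdigon hconnU k hk2 hprod L' hcards
    exact ⟨c, fun v => hsub v (hc1 v), hc2⟩
  exact Nat.sInf_le hch
end

section
/- Suppose Δ₀ is an integer such that every digon-free digraph D with ⌈Δ̃(D)⌉ = Δ₀ satisfies χ(D) ≤ Δ₀ − 1. Then every digon-free digraph D with ⌈Δ̃(D)⌉ ≥ Δ₀ satisfies χ(D) ≤ ⌈Δ̃(D)⌉ − 1. -/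
namespace S9

variable {V W : Type*}

/-! ### Arithmetic -/

lemma key_int (a b c : ℤ) (ha : 1 ≤ a) (hb : 1 ≤ b) (hc : 1 ≤ c) (h : a*b ≤ c^2) :
    (a-1)*(b-1) ≤ (c-1)^2 := by
  rcases le_or_gt (2*c) (a+b) with hs | hs
  · nlinarith
  · nlinarith [sq_nonneg (a+b-2*c), sq_nonneg (a-b), ha, hb]

lemma key_nat (a b c : ℕ) (ha : 1 ≤ a) (hb : 1 ≤ b) (h : a*b ≤ c^2) :
    (a-1)*(b-1) ≤ (c-1)^2 := by
  rcases Nat.eq_zero_or_pos c with rfl | hc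
  · simp at h; omega
  · zify [ha, hb, hc]
    exact key_int a b c (by exact_mod_cast ha) (by exact_mod_cast hb) (by exact_mod_cast hc)
      (by exact_mod_cast h)

/-! ### Acyclic sets and maximal acyclic sets -/

lemma acyclic_flip {Adj : V → V → Prop} {A : Set V} (h : AcyclicSet Adj A) :
    AcyclicSet (fun x y => Adj y x) A := by
  intro v hv hcyc
  refine h v hv ?_
  rw [← Relation.transGen_swap]
  exact Relation.TransGen.mono (fun x y hxy => ⟨hxy.2.1, hxy.1, hxy.2.2⟩) _ _ hcyc

/-- if `v ∉ A` has no out-neighbour in `A` (and no loop), then `insert v A` has no cycle. -/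
lemma no_cycle_of_no_out {Adj : V → V → Prop} {A : Set V} {v : V}
    (hA : AcyclicSet Adj A) (hout : ∀ a ∈ A, ¬ Adj v a) (hloop : ¬ Adj v v)
    {w : V} (hw : Relation.TransGen
      (fun x y => x ∈ insert v A ∧ y ∈ insert v A ∧ Adj x y) w w) : False := by
  set r := fun x y => x ∈ insert v A ∧ y ∈ insert v A ∧ Adj x y with hr
  have hstep : ∀ x y, r x y → x ≠ v := by
    rintro x y ⟨_, hy, hxy⟩ rfl
    rcases hy with rfl | hy
    · exact hloop hxy
    · exact hout _ hy hxy
  have hmemA : ∀ x y, r x y → x ∈ A := by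
    intro x y hxy
    rcases hxy.1 with rfl | hx
    · exact absurd rfl (hstep _ _ hxy)
    · exact hx
  have main : ∀ x y, Relation.TransGen r x y → y ≠ v →
      Relation.TransGen (fun x y => x ∈ A ∧ y ∈ A ∧ Adj x y) x y := by
    intro x y hxy
    induction hxy with
    | single h' =>
      intro hy
      refine Relation.TransGen.single ⟨hmemA _ _ h', ?_, h'.2.2⟩
      rcases h'.2.1 with rfl | h; · exact absurd rfl hy
      · exact h
    | tail h1 h2 ih =>
      intro hy
      exact (ih (hstep _ _ h2)).tail ⟨hmemA _ _ h2, by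
        rcases h2.2.1 with rfl | h; · exact absurd rfl hy
        · exact h, h2.2.2⟩
  by_cases hwv : w = v
  · subst hwv
    obtain ⟨c, hc, -⟩ := Relation.TransGen.head'_iff.mp hw
    exact hstep _ _ hc rfl
  · have h1 := main _ _ hw hwv
    have hwA : w ∈ A := by
      obtain ⟨c, hc, -⟩ := Relation.TransGen.head'_iff.mp h1
      exact hc.1
    exact hA w hwA h1

lemma maximal_acyclic [Finite V] {Adj : V → V → Prop} (hd : DigonFree Adj) :
    ∃ A : Set V, AcyclicSet Adj A ∧
      ∀ v ∉ A, (∃ a ∈ A, Adj v a) ∧ (∃ b ∈ A, Adj b v) := by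
  classical
  obtain ⟨A, hAs, hAmax⟩ := Set.Finite.exists_maximalFor id
    {A : Set V | AcyclicSet Adj A} (Set.toFinite _) ⟨∅, by intro v hv; exact absurd hv (by simp)⟩
  refine ⟨A, hAs, fun v hv => ?_⟩
  have hnot : ¬ AcyclicSet Adj (insert v A) := by
    intro hac
    have := hAmax hac (by simp [Set.subset_insert])
    simp only [id] at this
    exact hv (this (Set.mem_insert v A))
  have hcyc : ∃ w ∈ insert v A, Relation.TransGen
      (fun x y => x ∈ insert v A ∧ y ∈ insert v A ∧ Adj x y) w w := by
    by_contra hno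
    push_neg at hno
    exact hnot (fun w hw => hno w hw)
  obtain ⟨w, hw, hcw⟩ := hcyc
  have hloop : ¬ Adj v v := fun hl => hd v v hl hl
  constructor
  · by_contra hno
    push_neg at hno
    exact no_cycle_of_no_out hAs hno hloop hcw
  · by_contra hno
    push_neg at hno
    refine no_cycle_of_no_out (Adj := fun x y => Adj y x) (acyclic_flip hAs)
      (fun a ha hadj => hno a ha hadj) hloop (w := w) ?_
    rw [← Relation.transGen_swap]
    exact Relation.TransGen.mono (fun x y hxy => ⟨hxy.2.1, hxy.1, hxy.2.2⟩) _ _ hcw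

/-! ### Colorings -/

lemma acyclic_congr {Adj : V → V → Prop} {A B : Set V} (h : AcyclicSet Adj A) (e : B ⊆ A) :
    AcyclicSet Adj B := by
  intro v hv hc
  exact h v (e hv) (Relation.TransGen.mono (fun x y hxy => ⟨e hxy.1, e hxy.2.1, hxy.2.2⟩) _ _ hc)

lemma diColorable_mono {Adj : V → V → Prop} {j k : ℕ} (h : DiColorable Adj j) (hjk : j ≤ k) :
    DiColorable Adj k := by
  obtain ⟨f, hf⟩ := h
  refine ⟨fun v => Fin.castLE hjk (f v), fun i => ?_⟩
  by_cases hi : (i : ℕ) < j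
  · have he : {v | Fin.castLE hjk (f v) = i} = {v | f v = ⟨i, hi⟩} := by
      ext v; simp [Fin.ext_iff]
    rw [he]; exact hf _
  · intro v hv
    exact absurd ((Fin.ext_iff.mp hv) ▸ (f v).2) hi

lemma diColorable_card [Fintype V] {Adj : V → V → Prop} (hl : ∀ v, ¬ Adj v v) :
    DiColorable Adj (Fintype.card V) := by
  refine ⟨Fintype.equivFin V, fun i => ?_⟩
  intro v hv hc
  have : Relation.TransGen (fun _ _ : V => Adj v v) v v := by
    refine Relation.TransGen.mono (fun x y hxy => ?_) _ _ hc
    have hx : x = v := (Fintype.equivFin V).injective (hxy.1.trans hv.symm)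
    have hy : y = v := (Fintype.equivFin V).injective (hxy.2.1.trans hv.symm)
    rw [hx, hy] at hxy; exact hxy.2.2
  obtain ⟨c, hc', -⟩ := Relation.TransGen.head'_iff.mp this
  exact hl v hc'

lemma dichromNum_le {Adj : V → V → Prop} {k : ℕ} (h : DiColorable Adj k) :
    dichromNum Adj ≤ k := Nat.sInf_le h

lemma diColorable_of_le [Fintype V] {Adj : V → V → Prop} (hl : ∀ v, ¬ Adj v v) {k : ℕ}
    (h : dichromNum Adj ≤ k) : DiColorable Adj k := by
  have hne : {k | DiColorable Adj k}.Nonempty := ⟨_, diColorable_card hl⟩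
  exact diColorable_mono (Nat.sInf_mem hne) h

/-- extend a coloring of the complement of an acyclic set. -/
lemma extend_coloring {Adj : V → V → Prop} {A : Set V} (hA : AcyclicSet Adj A) {k : ℕ}
    (hc : DiColorable (fun (x y : {v : V // v ∉ A}) => Adj x.1 y.1) k) :
    DiColorable Adj (k + 1) := by
  classical
  obtain ⟨g, hg⟩ := hc
  refine ⟨fun v => if h : v ∈ A then Fin.last k else (g ⟨v, h⟩).castSucc, fun i => ?_⟩
  by_cases hi : i = Fin.last k
  · subst hi
    refine acyclic_congr hA ?_
    intro v hv
    simp only [Set.mem_setOf_eq] at hv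
    by_contra hvA
    rw [dif_neg hvA] at hv
    exact absurd hv (Fin.castSucc_lt_last _).ne
  · set j := i.castPred hi with hj
    intro v hv hcyc
    have hmem : ∀ x, (dite (x ∈ A) (fun _ => Fin.last k)
        (fun h => (g ⟨x, h⟩).castSucc) = i) → ∃ hx : x ∉ A, g ⟨x, hx⟩ = j := by
      intro x hx
      by_cases hxA : x ∈ A
      · rw [dif_pos hxA] at hx; exact absurd hx.symm hi
      · rw [dif_neg hxA] at hx
        refine ⟨hxA, ?_⟩
        have : (g ⟨x, hxA⟩).castSucc = j.castSucc := by rw [hx, hj, Fin.castSucc_castPred]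
        exact Fin.castSucc_injective _ this
    obtain ⟨hvA, hgv⟩ := hmem v hv
    set r' := fun (x y : {u : V // u ∉ A}) =>
      x ∈ {u : {u : V // u ∉ A} | g u = j} ∧ y ∈ {u : {u : V // u ∉ A} | g u = j} ∧ Adj x.1 y.1
        with hr'
    have lift : ∀ x y, Relation.TransGen (fun x y => x ∈ {v | dite (v ∈ A) (fun _ => Fin.last k)
        (fun h => (g ⟨v, h⟩).castSucc) = i} ∧ y ∈ {v | dite (v ∈ A) (fun _ => Fin.last k)
        (fun h => (g ⟨v, h⟩).castSucc) = i} ∧ Adj x y) x y →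
        ∀ (hx : x ∉ A) (hy : y ∉ A), Relation.TransGen r' ⟨x, hx⟩ ⟨y, hy⟩ := by
      intro x y hxy
      induction hxy with
      | single h' =>
        intro hx hy
        exact Relation.TransGen.single ⟨(hmem _ h'.1).2, (hmem _ h'.2.1).2, h'.2.2⟩
      | @tail b c h1 h2 ih =>
        intro hx hy
        obtain ⟨hbA, hgb⟩ := hmem _ h2.1
        exact (ih hx hbA).tail ⟨hgb, (hmem _ h2.2.1).2, h2.2.2⟩
    exact hg j ⟨v, hvA⟩ hgv (lift v v hcyc hvA hvA)

/-! ### Degrees, subdigraphs and disjoint unions -/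

lemma sqrt_le_tildeDelta [Fintype V] (Adj : V → V → Prop) (v : V) :
    Real.sqrt ((outDeg Adj v : ℝ) * (inDeg Adj v : ℝ)) ≤ tildeDelta Adj := by
  rw [tildeDelta]
  exact le_ciSup (f := fun v : V => Real.sqrt ((outDeg Adj v : ℝ) * (inDeg Adj v : ℝ)))
    (Set.Finite.bddAbove (Set.finite_range _)) v

lemma tildeDelta_le [Fintype V] {Adj : V → V → Prop} {c : ℝ} (hc : 0 ≤ c)
    (h : ∀ v, Real.sqrt ((outDeg Adj v : ℝ) * (inDeg Adj v : ℝ)) ≤ c) :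
    tildeDelta Adj ≤ c := by
  rw [tildeDelta]
  cases isEmpty_or_nonempty V
  · rw [Real.iSup_of_isEmpty]; exact hc
  · exact ciSup_le h

/-- restricted out-degree drops when there is an out-neighbour in the removed set. -/
lemma outDeg_restrict {Adj : V → V → Prop} [Finite V] {A : Set V} {v : V} (hv : v ∉ A)
    (ha : ∃ a ∈ A, Adj v a) :
    outDeg (fun (x y : {u : V // u ∉ A}) => Adj x.1 y.1) ⟨v, hv⟩ + 1 ≤ outDeg Adj v := by
  obtain ⟨a, haA, hadj⟩ := ha
  have hinj : Function.Injective
      (fun x : ({u : {u : V // u ∉ A} // Adj v u.1} ⊕ Unit) =>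
        (Sum.elim (fun u => (⟨u.1.1, u.2⟩ : {u : V // Adj v u}))
          (fun _ => ⟨a, hadj⟩) x)) := by
    rintro (x | x) (y | y) hxy <;> simp only [Sum.elim_inl, Sum.elim_inr, Subtype.mk.injEq] at hxy
    · exact congrArg Sum.inl (Subtype.ext (Subtype.ext hxy))
    · exact absurd (hxy ▸ haA) x.1.2
    · exact absurd (hxy ▸ haA) y.1.2
    · rfl
  have h1 := Nat.card_le_card_of_injective _ hinj
  rw [Nat.card_sum] at h1
  have h2 : Nat.card Unit = 1 := Nat.card_unique
  rw [h2] at h1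
  exact h1

/-- disjoint union of two digraphs -/
def sumAdj (AV : V → V → Prop) (AW : W → W → Prop) : V ⊕ W → V ⊕ W → Prop
  | .inl a, .inl b => AV a b
  | .inr a, .inr b => AW a b
  | _, _ => False

lemma sumAdj_digonFree {AV : V → V → Prop} {AW : W → W → Prop}
    (h1 : DigonFree AV) (h2 : DigonFree AW) : DigonFree (sumAdj AV AW) := by
  rintro (a | a) (b | b) hab hba
  · exact h1 a b hab hba
  · exact hab
  · exact hab
  · exact h2 a b hab hba

lemma outDeg_sumAdj_inl [Finite V] [Finite W] (AV : V → V → Prop) (AW : W → W → Prop) (v : V) :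
    outDeg (sumAdj AV AW) (Sum.inl v) = outDeg AV v := by
  rw [outDeg, Nat.card_congr (Equiv.subtypeSum (p := fun u => sumAdj AV AW (Sum.inl v) u)),
    Nat.card_sum]
  have h0 : Nat.card {b : W // sumAdj AV AW (Sum.inl v) (Sum.inr b)} = 0 :=
    @Nat.card_of_isEmpty _ ⟨fun x => x.2⟩
  rw [h0, add_zero, outDeg]
  rfl

lemma inDeg_sumAdj_inl [Finite V] [Finite W] (AV : V → V → Prop) (AW : W → W → Prop) (v : V) :
    inDeg (sumAdj AV AW) (Sum.inl v) = inDeg AV v := by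
  rw [inDeg, Nat.card_congr (Equiv.subtypeSum (p := fun u => sumAdj AV AW u (Sum.inl v))),
    Nat.card_sum]
  have h0 : Nat.card {b : W // sumAdj AV AW (Sum.inr b) (Sum.inl v)} = 0 :=
    @Nat.card_of_isEmpty _ ⟨fun x => x.2⟩
  rw [h0, add_zero, inDeg]
  rfl

lemma outDeg_sumAdj_inr [Finite V] [Finite W] (AV : V → V → Prop) (AW : W → W → Prop) (w : W) :
    outDeg (sumAdj AV AW) (Sum.inr w) = outDeg AW w := by
  rw [outDeg, Nat.card_congr (Equiv.subtypeSum (p := fun u => sumAdj AV AW (Sum.inr w) u)),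
    Nat.card_sum]
  have h0 : Nat.card {b : V // sumAdj AV AW (Sum.inr w) (Sum.inl b)} = 0 :=
    @Nat.card_of_isEmpty _ ⟨fun x => x.2⟩
  rw [h0, zero_add, outDeg]
  rfl

lemma inDeg_sumAdj_inr [Finite V] [Finite W] (AV : V → V → Prop) (AW : W → W → Prop) (w : W) :
    inDeg (sumAdj AV AW) (Sum.inr w) = inDeg AW w := by
  rw [inDeg, Nat.card_congr (Equiv.subtypeSum (p := fun u => sumAdj AV AW u (Sum.inr w))),
    Nat.card_sum]
  have h0 : Nat.card {b : V // sumAdj AV AW (Sum.inl b) (Sum.inr w)} = 0 :=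
    @Nat.card_of_isEmpty _ ⟨fun x => x.2⟩
  rw [h0, zero_add, inDeg]
  rfl

lemma restrict_coloring_inl {AV : V → V → Prop} {AW : W → W → Prop} {k : ℕ}
    (h : DiColorable (sumAdj AV AW) k) : DiColorable AV k := by
  obtain ⟨f, hf⟩ := h
  refine ⟨fun v => f (Sum.inl v), fun i v hv hc => ?_⟩
  refine hf i (Sum.inl v) hv ?_
  exact Relation.TransGen.lift Sum.inl (fun x y hxy => ⟨hxy.1, hxy.2.1, hxy.2.2⟩) _ _ hc

/-! ### The triangle blow-up -/

/-- the triangle blow-up: a digon-free digraph where every degree is `n`. -/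
def triAdj (n : ℕ) : (ZMod 3 × Fin n) → (ZMod 3 × Fin n) → Prop :=
  fun a b => b.1 = a.1 + 1

lemma triAdj_digonFree (n : ℕ) : DigonFree (triAdj n) := by
  rintro a b hab hba
  rw [triAdj, hab] at hba
  have h2 : a.1 + 0 = a.1 + (1 + 1) := by rw [add_zero, ← add_assoc]; exact hba
  have := add_left_cancel h2
  exact absurd this (by decide)

lemma triAdj_outDeg (n : ℕ) (a : ZMod 3 × Fin n) : outDeg (triAdj n) a = n := by
  rw [outDeg, Nat.card_congr
    (⟨fun u => u.1.2, fun y => ⟨(a.1 + 1, y), rfl⟩,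
      fun u => by ext : 1; exact Prod.ext u.2.symm rfl, fun y => rfl⟩ :
      {u : ZMod 3 × Fin n // triAdj n a u} ≃ Fin n), Nat.card_eq_fintype_card,
    Fintype.card_fin]

lemma triAdj_inDeg (n : ℕ) (a : ZMod 3 × Fin n) : inDeg (triAdj n) a = n := by
  rw [inDeg, Nat.card_congr
    (⟨fun u => u.1.2, fun y => ⟨(a.1 - 1, y), by simp [triAdj]⟩,
      fun u => by
        ext : 1
        refine Prod.ext ?_ rfl
        have := u.2
        rw [triAdj] at this
        simp only
        rw [this]; ring,
      fun y => rfl⟩ :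
      {u : ZMod 3 × Fin n // triAdj n u a} ≃ Fin n), Nat.card_eq_fintype_card,
    Fintype.card_fin]

/-! ### `tildeDelta` computations -/

/-- ceiling of `tildeDelta` of a subdigraph obtained by deleting a maximal acyclic set. -/
lemma ceil_tildeDelta_restrict [Fintype V] {Adj : V → V → Prop} {A : Set V} {Δ : ℕ}
    [Fintype {u : V // u ∉ A}] (hΔ : 1 ≤ Δ) (hceil : ⌈tildeDelta Adj⌉₊ = Δ)
    (hmax : ∀ v ∉ A, (∃ a ∈ A, Adj v a) ∧ (∃ b ∈ A, Adj b v)) :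
    ⌈tildeDelta (fun x y : {u : V // u ∉ A} => Adj x.1 y.1)⌉₊ ≤ Δ - 1 := by
  rw [Nat.ceil_le]
  refine tildeDelta_le (by positivity) ?_
  rintro ⟨v, hv⟩
  obtain ⟨⟨a0, ha0, hadj0⟩, ⟨b0, hb0, hadj1⟩⟩ := hmax v hv
  set a := outDeg Adj v with hadef
  set b := inDeg Adj v with hbdef
  have ha1 : 1 ≤ a := by
    rw [hadef, outDeg]
    haveI : Nonempty {u // Adj v u} := ⟨⟨a0, hadj0⟩⟩
    exact Nat.card_pos
  have hb1 : 1 ≤ b := by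
    rw [hbdef, inDeg]
    haveI : Nonempty {u // Adj u v} := ⟨⟨b0, hadj1⟩⟩
    exact Nat.card_pos
  have hout : outDeg (fun x y : {u : V // u ∉ A} => Adj x.1 y.1) ⟨v, hv⟩ + 1 ≤ a :=
    outDeg_restrict hv ⟨a0, ha0, hadj0⟩
  have hin : inDeg (fun x y : {u : V // u ∉ A} => Adj x.1 y.1) ⟨v, hv⟩ + 1 ≤ b :=
    outDeg_restrict (Adj := fun x y => Adj y x) hv ⟨b0, hb0, hadj1⟩
  -- `a * b ≤ Δ ^ 2`
  have hab : a * b ≤ Δ ^ 2 := by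
    have h1 : Real.sqrt ((a : ℝ) * (b : ℝ)) ≤ (Δ : ℝ) := by
      refine (sqrt_le_tildeDelta Adj v).trans ?_
      calc tildeDelta Adj ≤ (⌈tildeDelta Adj⌉₊ : ℝ) := Nat.le_ceil _
        _ = (Δ : ℝ) := by rw [hceil]
    have h2 : ((a : ℝ) * (b : ℝ)) ≤ (Δ : ℝ) ^ 2 := by
      nlinarith [Real.sq_sqrt (by positivity : (0:ℝ) ≤ (a : ℝ) * (b : ℝ)),
        Real.sqrt_nonneg ((a : ℝ) * (b : ℝ))]
    exact_mod_cast h2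
  have hkey : (a - 1) * (b - 1) ≤ (Δ - 1) ^ 2 := key_nat a b Δ ha1 hb1 hab
  have hprod : outDeg (fun x y : {u : V // u ∉ A} => Adj x.1 y.1) ⟨v, hv⟩ *
      inDeg (fun x y : {u : V // u ∉ A} => Adj x.1 y.1) ⟨v, hv⟩ ≤ (Δ - 1) ^ 2 :=
    le_trans (Nat.mul_le_mul (by omega) (by omega)) hkey
  have : Real.sqrt ((outDeg (fun x y : {u : V // u ∉ A} => Adj x.1 y.1) ⟨v, hv⟩ : ℝ) *
      (inDeg (fun x y : {u : V // u ∉ A} => Adj x.1 y.1) ⟨v, hv⟩ : ℝ)) ≤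
      Real.sqrt ((((Δ - 1) ^ 2 : ℕ) : ℝ)) := by
    refine Real.sqrt_le_sqrt ?_
    exact_mod_cast hprod
  refine this.trans ?_
  rw [show (((Δ - 1) ^ 2 : ℕ) : ℝ) = ((Δ - 1 : ℕ) : ℝ) ^ 2 by push_cast; ring,
    Real.sqrt_sq (by positivity)]

lemma tildeDelta_sum_eq [Fintype V] [Fintype W] [Nonempty W] {AV : V → V → Prop}
    {AW : W → W → Prop} {n : ℕ} (hV : tildeDelta AV ≤ (n : ℝ))
    (hoW : ∀ w, outDeg AW w = n) (hiW : ∀ w, inDeg AW w = n) :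
    tildeDelta (sumAdj AV AW) = (n : ℝ) := by
  have hval : ∀ w : W, Real.sqrt ((outDeg (sumAdj AV AW) (Sum.inr w) : ℝ) *
      (inDeg (sumAdj AV AW) (Sum.inr w) : ℝ)) = (n : ℝ) := by
    intro w
    rw [outDeg_sumAdj_inr, inDeg_sumAdj_inr, hoW, hiW, Real.sqrt_mul_self (by positivity)]
  refine le_antisymm ?_ ?_
  · refine tildeDelta_le (by positivity) ?_
    rintro (v | w)
    · rw [outDeg_sumAdj_inl, inDeg_sumAdj_inl]
      exact (sqrt_le_tildeDelta AV v).trans hV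
    · rw [hval w]
  · obtain ⟨w⟩ := ‹Nonempty W›
    calc (n : ℝ) = _ := (hval w).symm
      _ ≤ _ := sqrt_le_tildeDelta (sumAdj AV AW) (Sum.inr w)

end S9



/-- **Proposition 1.** Suppose `Δ₀` is an integer such that every digon-free digraph `D`
with `⌈Δ̃(D)⌉ = Δ₀` satisfies `χ(D) ≤ Δ₀ - 1`.  Then every digon-free digraph `D` with
`⌈Δ̃(D)⌉ ≥ Δ₀` satisfies `χ(D) ≤ ⌈Δ̃(D)⌉ - 1`. -/
theorem stmt_9 (Δ₀ : ℕ)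
    (h : ∀ (V : Type) [Fintype V] (Adj : V → V → Prop),
      DigonFree Adj → ⌈tildeDelta Adj⌉₊ = Δ₀ → dichromNum Adj ≤ Δ₀ - 1) :
    ∀ (V : Type) [Fintype V] (Adj : V → V → Prop),
      DigonFree Adj → Δ₀ ≤ ⌈tildeDelta Adj⌉₊ →
      dichromNum Adj ≤ ⌈tildeDelta Adj⌉₊ - 1 := by
  classical
  rcases Nat.eq_zero_or_pos Δ₀ with rfl | hpos
  · -- the hypothesis is contradictory for `Δ₀ = 0`
    exfalso
    have ho : ∀ v : PUnit.{1}, outDeg (fun _ _ : PUnit.{1} => False) v = 0 :=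
      fun v => @Nat.card_of_isEmpty _ ⟨fun x => x.2⟩
    have hi : ∀ v : PUnit.{1}, inDeg (fun _ _ : PUnit.{1} => False) v = 0 :=
      fun v => @Nat.card_of_isEmpty _ ⟨fun x => x.2⟩
    have htd : tildeDelta (fun _ _ : PUnit.{1} => False) = 0 := by
      rw [tildeDelta]
      have : ∀ v : PUnit.{1}, Real.sqrt ((outDeg (fun _ _ : PUnit.{1} => False) v : ℝ) *
          (inDeg (fun _ _ : PUnit.{1} => False) v : ℝ)) = 0 := by
        intro v; rw [ho, hi]; simp
      simp only [this]
      exact ciSup_const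
    have h0 := h PUnit (fun _ _ => False) (fun _ _ hf => hf.elim)
      (by rw [htd]; simp)
    have hco : DiColorable (fun _ _ : PUnit.{1} => False) 1 := by
      refine ⟨fun _ => 0, fun i v hv hc => ?_⟩
      obtain ⟨c, hc', -⟩ := Relation.TransGen.head'_iff.mp hc
      exact hc'.2.2
    have hmem := Nat.sInf_mem (⟨1, hco⟩ : {k | DiColorable (fun _ _ : PUnit.{1} => False) k}.Nonempty)
    rw [dichromNum] at h0
    rw [Nat.le_zero.mp h0] at hmem
    obtain ⟨f, -⟩ := hmem
    exact (f PUnit.unit).elim0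
  · -- main argument : strong induction on `⌈tildeDelta⌉`
    suffices H : ∀ Δ : ℕ, ∀ (V : Type) [Fintype V] (Adj : V → V → Prop),
        DigonFree Adj → Δ₀ ≤ Δ → ⌈tildeDelta Adj⌉₊ = Δ → dichromNum Adj ≤ Δ - 1 by
      intro V _ Adj hDF hge
      exact H _ V Adj hDF hge rfl
    intro Δ
    induction Δ using Nat.strong_induction_on with
    | _ Δ IH =>
      intro V _ Adj hDF hle hceil
      have hl : ∀ v, ¬ Adj v v := fun v hv => hDF v v hv hv
      rcases eq_or_lt_of_le hle with heq | hlt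
      · subst heq
        exact h V Adj hDF hceil
      · -- `Δ₀ < Δ`
        have hΔ1 : 1 ≤ Δ := le_trans hpos hlt.le
        obtain ⟨A, hAac, hAmax⟩ := S9.maximal_acyclic hDF
        letI : Fintype {u : V // u ∉ A} := Fintype.ofFinite _
        set Adj' : {u : V // u ∉ A} → {u : V // u ∉ A} → Prop :=
          fun x y => Adj x.1 y.1 with hAdj'
        have hDF' : DigonFree Adj' := fun x y hxy hyx => hDF x.1 y.1 hxy hyx
        have hl' : ∀ v, ¬ Adj' v v := fun v hv => hDF' v v hv hv
        have hd' : ⌈tildeDelta Adj'⌉₊ ≤ Δ - 1 :=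
          S9.ceil_tildeDelta_restrict hΔ1 hceil hAmax
        have hcol' : DiColorable Adj' (Δ - 2) := by
          rcases le_or_gt Δ₀ ⌈tildeDelta Adj'⌉₊ with hc | hc
          · -- apply the induction hypothesis
            have hlt' : ⌈tildeDelta Adj'⌉₊ < Δ := by omega
            have := IH _ hlt' _ Adj' hDF' hc rfl
            exact S9.diColorable_mono (S9.diColorable_of_le hl' this) (by omega)
          · -- add a disjoint triangle blow-up and use `h`
            haveI : Nonempty (ZMod 3 × Fin Δ₀) := ⟨(0, ⟨0, hpos⟩)⟩
            have hVle : tildeDelta Adj' ≤ (Δ₀ : ℝ) := by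
              calc tildeDelta Adj' ≤ (⌈tildeDelta Adj'⌉₊ : ℝ) := Nat.le_ceil _
                _ ≤ (Δ₀ : ℝ) := by exact_mod_cast hc.le
            have hsum : tildeDelta (S9.sumAdj Adj' (S9.triAdj Δ₀)) = (Δ₀ : ℝ) :=
              S9.tildeDelta_sum_eq hVle (S9.triAdj_outDeg Δ₀) (S9.triAdj_inDeg Δ₀)
            have hsumDF : DigonFree (S9.sumAdj Adj' (S9.triAdj Δ₀)) :=
              S9.sumAdj_digonFree hDF' (S9.triAdj_digonFree Δ₀)
            have happ := h _ (S9.sumAdj Adj' (S9.triAdj Δ₀)) hsumDF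
              (by rw [hsum, Nat.ceil_natCast])
            have hlsum : ∀ v, ¬ S9.sumAdj Adj' (S9.triAdj Δ₀) v v :=
              fun v hv => hsumDF v v hv hv
            have := S9.restrict_coloring_inl (S9.diColorable_of_le hlsum happ)
            exact S9.diColorable_mono this (by omega)
        have hfin : DiColorable Adj (Δ - 2 + 1) := S9.extend_coloring hAac hcol'
        have : dichromNum Adj ≤ Δ - 2 + 1 := S9.dichromNum_le hfin
        omega
end
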